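/- arXiv:2408.10748 — 5 statements merged into one kernel-verified Lean document; each statement's English description precedes it below -/
import Mathlib

section
/- Let ρ be a geodesic in a graph X, let x₀ ∈ ρ be a vertex at distance at least 5R from both endpoints of ρ, and let K ≥ 0 with K < R. If ρ' is another geodesic with ρ ⊂ ρ', then the set N_R(x₀) \ N_K(ρ) equals N_R(x₀) \ N_K(ρ'). -/
open Set Metric

/-- `f` restricted to the integer interval `[a, b]` is a geodesic in the graph `X`
(with its integer-valued path metric, viewed as a metric space). -/
def IsGeodesicOn {X : Type*} [MetricSpace X] (f : ℤ → X) (a b : ℤ) : Prop :=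
  ∀ m ∈ Icc a b, ∀ n ∈ Icc a b, dist (f m) (f n) = |(m : ℝ) - n|

/-- If `ρ ⊂ ρ'` are geodesics and `x₀ ∈ ρ` lies at distance at least `5R` from the
endpoints of `ρ`, then `N_R(x₀) \ N_K(ρ) = N_R(x₀) \ N_K(ρ')` for `0 ≤ K < R`. -/
theorem complement_nbhd_agrees {X : Type*} [MetricSpace X]
    (f : ℤ → X) (a b a' b' : ℤ) (hsub : Icc a b ⊆ Icc a' b')
    (hgeo : IsGeodesicOn f a' b')
    (i : ℤ) (hi : i ∈ Icc a b)
    (R K : ℝ) (hK : 0 ≤ K) (hKR : K < R)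
    (hend₁ : 5 * R ≤ dist (f i) (f a)) (hend₂ : 5 * R ≤ dist (f i) (f b)) :
    closedBall (f i) R \ {x | infDist x (f '' Icc a b) ≤ K} =
      closedBall (f i) R \ {x | infDist x (f '' Icc a' b') ≤ K} := by
  have hi' : i ∈ Icc a' b' := hsub hi
  have hab : a ∈ Icc a b := ⟨le_refl a, hi.1.trans hi.2⟩
  have hbb : b ∈ Icc a b := ⟨hi.1.trans hi.2, le_refl b⟩
  have hne : (f '' Icc a b).Nonempty := ⟨f i, mem_image_of_mem f hi⟩
  have hia : dist (f i) (f a) = |(i : ℝ) - a| := hgeo i hi' a (hsub hab)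
  have hib : dist (f i) (f b) = |(i : ℝ) - b| := hgeo i hi' b (hsub hbb)
  have hRpos : 0 < R := hK.trans_lt hKR
  have hai : (a : ℝ) ≤ i := by exact_mod_cast hi.1
  have hbi : (i : ℝ) ≤ b := by exact_mod_cast hi.2
  have h5a : 5 * R ≤ (i : ℝ) - a := by
    rw [hia, abs_of_nonneg (by linarith)] at hend₁; exact hend₁
  have h5b : 5 * R ≤ (b : ℝ) - i := by
    rw [hib, abs_of_nonpos (by linarith), neg_sub] at hend₂; exact hend₂
  ext x
  simp only [mem_diff, mem_closedBall, mem_setOf_eq]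
  constructor
  · rintro ⟨hx, hs⟩
    refine ⟨hx, fun hbig => hs ?_⟩
    refine le_of_forall_pos_le_add fun ε hε => ?_
    set ε' := min ε ((R - K) / 2) with hε'def
    have hε'pos : 0 < ε' := lt_min hε (by linarith)
    have hlt : infDist x (f '' Icc a' b') < K + ε' := hbig.trans_lt (by linarith)
    obtain ⟨y, hy, hxy⟩ := (infDist_lt_iff ⟨f i, mem_image_of_mem f hi'⟩).mp hlt
    obtain ⟨j, hj, rfl⟩ := hy
    have hmr : ε' ≤ (R - K) / 2 := min_le_right _ _
    have hml : ε' ≤ ε := min_le_left _ _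
    have hxfj : dist x (f j) < R := by linarith
    have hij : |(i : ℝ) - j| < 2 * R := by
      rw [← hgeo i hi' j hj]
      have := dist_triangle (f i) x (f j)
      rw [dist_comm (f i) x] at this
      linarith
    have habs := abs_lt.mp hij
    have hjmem : j ∈ Icc a b := by
      constructor
      · have : (a : ℝ) < j := by linarith [habs.2]
        exact_mod_cast this.le
      · have : (j : ℝ) < b := by linarith [habs.1]
        exact_mod_cast this.le
    exact le_trans (infDist_le_dist_of_mem (mem_image_of_mem f hjmem)) (by linarith)
  · rintro ⟨hx, hb⟩
    exact ⟨hx, fun hs =>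
      hb (le_trans (infDist_le_infDist_of_subset (image_mono (f := f) hsub) hne) hs)⟩
end

section
/- Every infinite, locally finite, connected, vertex-transitive graph contains a bi-infinite geodesic, i.e. an isometric embedding of ℤ (with the standard metric) into the vertex set with the path metric. -/
open SimpleGraph

section Aux

variable {V : Type*} {G : SimpleGraph V}

private lemma iso_dist_aux (hconn : G.Connected) (φ : G ≃g G) (u v : V) :
    G.dist (φ u) (φ v) ≤ G.dist u v := by
  obtain ⟨p, hp⟩ := (hconn u v).exists_walk_length_eq_dist
  calc G.dist (φ u) (φ v) ≤ (p.map φ.toHom).length := SimpleGraph.dist_le _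
    _ = G.dist u v := by rw [SimpleGraph.Walk.length_map, hp]

private lemma iso_dist (hconn : G.Connected) (φ : G ≃g G) (u v : V) :
    G.dist (φ u) (φ v) = G.dist u v := by
  refine le_antisymm (iso_dist_aux hconn φ u v) ?_
  have := iso_dist_aux hconn φ.symm (φ u) (φ v)
  simpa using this

private lemma getVert_dist_le (hconn : G.Connected) {a b : V} (p : G.Walk a b)
    {i j : ℕ} (hij : i ≤ j) (hj : j ≤ p.length) :
    G.dist (p.getVert i) (p.getVert j) ≤ j - i := by
  induction j, hij using Nat.le_induction with
  | base => simp
  | succ j hij ih =>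
    have hadj := p.adj_getVert_succ (by omega : j < p.length)
    calc G.dist (p.getVert i) (p.getVert (j + 1))
        ≤ G.dist (p.getVert i) (p.getVert j) + G.dist (p.getVert j) (p.getVert (j + 1)) :=
          hconn.dist_triangle
      _ ≤ (j - i) + 1 := add_le_add (ih (by omega)) (le_of_eq (dist_eq_one_iff_adj.mpr hadj))
      _ = j + 1 - i := by omega

private lemma getVert_dist_eq (hconn : G.Connected) {a b : V} (p : G.Walk a b)
    (hp : p.length = G.dist a b) {i j : ℕ} (hij : i ≤ j) (hj : j ≤ p.length) :
    G.dist (p.getVert i) (p.getVert j) = j - i := by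
  refine le_antisymm (getVert_dist_le hconn p hij hj) ?_
  have h1 : G.dist a (p.getVert i) ≤ i := by
    have := getVert_dist_le hconn p (Nat.zero_le i) (le_trans hij hj)
    simpa using this
  have h2 : G.dist (p.getVert j) b ≤ p.length - j := by
    have := getVert_dist_le hconn p hj (le_refl p.length)
    simpa [p.getVert_length] using this
  have h3 : G.dist a b ≤ G.dist a (p.getVert i) + G.dist (p.getVert i) (p.getVert j)
      + G.dist (p.getVert j) b :=
    le_trans hconn.dist_triangle (add_le_add_left hconn.dist_triangle _)
  omega

private lemma ball_finite (hconn : G.Connected) (hlf : ∀ v : V, (G.neighborSet v).Finite)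
    (v : V) : ∀ n : ℕ, {u : V | G.dist v u ≤ n}.Finite := by
  intro n
  induction n with
  | zero =>
    refine Set.Finite.subset (Set.finite_singleton v) ?_
    intro u hu
    simp only [Set.mem_setOf_eq, Nat.le_zero] at hu
    have : u = v := (hconn.dist_eq_zero_iff.mp hu).symm
    simp [this]
  | succ n ih =>
    refine Set.Finite.subset (ih.union (ih.biUnion fun w _ => hlf w)) ?_
    intro u hu
    simp only [Set.mem_setOf_eq] at hu
    by_cases h : G.dist v u ≤ n
    · exact Or.inl h
    · right
      have hne : G.dist v u ≠ 0 := by omega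
      obtain ⟨p, hp⟩ := exists_walk_of_dist_ne_zero hne
      have hlen : 0 < p.length := by omega
      have hadj := p.adj_getVert_succ (by omega : p.length - 1 < p.length)
      rw [(by omega : p.length - 1 + 1 = p.length), p.getVert_length] at hadj
      refine Set.mem_biUnion (show p.getVert (p.length - 1) ∈ {w : V | G.dist v w ≤ n} from ?_) hadj
      have := getVert_dist_le hconn p (Nat.zero_le (p.length - 1)) (by omega)
      simp only [p.getVert_zero, Nat.sub_zero] at this
      simp only [Set.mem_setOf_eq]
      omega

end Aux

/-- Every infinite, locally finite, connected, vertex-transitive graph contains a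
bi-infinite geodesic. -/
theorem exists_biinfinite_geodesic {V : Type*} (G : SimpleGraph V)
    (hinf : Infinite V) (hlf : ∀ v : V, (G.neighborSet v).Finite)
    (hconn : G.Connected)
    (htrans : ∀ u v : V, ∃ φ : G ≃g G, φ u = v) :
    ∃ γ : ℤ → V, ∀ m n : ℤ, (G.dist (γ m) (γ n) : ℤ) = |m - n| := by
  obtain ⟨v₀⟩ : Nonempty V := inferInstance
  -- unbounded distances
  have hub : ∀ n : ℕ, ∃ u : V, n ≤ G.dist v₀ u := by
    intro n
    by_contra h
    push_neg at h
    have : (Set.univ : Set V).Finite := by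
      refine Set.Finite.subset (ball_finite hconn hlf v₀ n) ?_
      intro u _
      exact le_of_lt (h u)
    exact (Set.infinite_univ (α := V)) this
  letI : TopologicalSpace V := ⊥
  haveI : DiscreteTopology V := ⟨rfl⟩
  set B : ℤ → Set V := fun k => {u : V | (G.dist v₀ u : ℤ) ≤ |k|} with hB
  have hBfin : ∀ k, (B k).Finite := by
    intro k
    refine Set.Finite.subset (ball_finite hconn hlf v₀ k.natAbs) ?_
    intro u hu
    simp only [hB, Set.mem_setOf_eq] at hu ⊢
    rw [Int.abs_eq_natAbs] at hu
    omega
  set K : Set (ℤ → V) := Set.univ.pi B with hKdef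
  have hK : IsCompact K := isCompact_univ_pi fun k => (hBfin k).isCompact
  have hKc : IsClosed K := isClosed_set_pi fun k _ => isClosed_discrete _
  set S : ℕ → Set (ℤ → V) := fun N =>
    {f : ℤ → V | ∀ a b : ℤ, a.natAbs ≤ N → b.natAbs ≤ N →
      (G.dist (f a) (f b) : ℤ) = |a - b|} with hS
  have hSclosed : ∀ N, IsClosed (S N) := by
    intro N
    have : S N = ⋂ (a : ℤ) (b : ℤ) (_ : a.natAbs ≤ N) (_ : b.natAbs ≤ N),
        {f : ℤ → V | (G.dist (f a) (f b) : ℤ) = |a - b|} := by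
      ext f; simp [hS]
    rw [this]
    refine isClosed_iInter fun a => isClosed_iInter fun b =>
      isClosed_iInter fun _ => isClosed_iInter fun _ => ?_
    have : {f : ℤ → V | (G.dist (f a) (f b) : ℤ) = |a - b|} =
        (fun f : ℤ → V => (f a, f b)) ⁻¹'
          {p : V × V | (G.dist p.1 p.2 : ℤ) = |a - b|} := rfl
    rw [this]
    exact (isClosed_discrete _).preimage ((continuous_apply a).prodMk (continuous_apply b))
  have hSmono : ∀ N : ℕ, S (N + 1) ⊆ S N := by
    intro N f hf a b ha hb
    exact hf a b (by omega) (by omega)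
  -- nonemptiness of K ∩ S N
  have hne : ∀ N : ℕ, (K ∩ S N).Nonempty := by
    intro N
    obtain ⟨u, hu⟩ := hub (2 * N)
    obtain ⟨p, hp⟩ := hconn.exists_walk_length_eq_dist v₀ u
    have hlen : 2 * N ≤ p.length := by omega
    obtain ⟨φ, hφ⟩ := htrans (p.getVert N) v₀
    set c : ℤ → ℕ := fun k => (max 0 (min (k + (N : ℤ)) (2 * N))).toNat with hc
    have hcast : ∀ k : ℤ, (c k : ℤ) = max 0 (min (k + (N : ℤ)) (2 * N)) := by
      intro k
      simp only [hc]
      rw [Int.toNat_of_nonneg (le_max_left _ _)]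
    have hcle : ∀ k : ℤ, c k ≤ 2 * N := by
      intro k
      have := hcast k
      omega
    have hIdist : ∀ i j : ℕ, i ≤ 2 * N → j ≤ 2 * N →
        (G.dist (p.getVert i) (p.getVert j) : ℤ) = |(i : ℤ) - j| := by
      intro i j hi hj
      rcases le_total i j with h | h
      · rw [getVert_dist_eq hconn p hp h (by omega), abs_sub_comm,
          abs_of_nonneg (by omega : (0 : ℤ) ≤ (j : ℤ) - (i : ℤ))]
        omega
      · rw [SimpleGraph.dist_comm, getVert_dist_eq hconn p hp h (by omega),
          abs_of_nonneg (by omega : (0 : ℤ) ≤ (i : ℤ) - (j : ℤ))]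
        omega
    refine ⟨fun k => φ (p.getVert (c k)), ?_, ?_⟩
    · -- membership in K
      intro k _
      simp only [hB, Set.mem_setOf_eq]
      have key : G.dist v₀ (φ (p.getVert (c k))) =
          G.dist (p.getVert N) (p.getVert (c k)) := by
        rw [← iso_dist hconn φ (p.getVert N) (p.getVert (c k)), hφ]
      rw [key, hIdist N (c k) (by omega) (hcle k)]
      have h1 := hcast k
      have h2 : (k : ℤ) ≤ |k| := le_abs_self k
      have h3 : -|k| ≤ (k : ℤ) := neg_abs_le k
      rw [abs_le]
      constructor <;> omega
    · -- membership in S N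
      intro a b ha hb
      simp only
      rw [iso_dist hconn, hIdist (c a) (c b) (hcle a) (hcle b)]
      have h1 := hcast a
      have h2 := hcast b
      have h3 : (c a : ℤ) = a + N := by omega
      have h4 : (c b : ℤ) = b + N := by omega
      rw [h3, h4]
      congr 1
      ring
  obtain ⟨γ, hγ⟩ := IsCompact.nonempty_iInter_of_sequence_nonempty_isCompact_isClosed
    (fun N => K ∩ S N) (fun N => Set.inter_subset_inter_right K (hSmono N))
    hne (hK.inter_right (hSclosed 0)) (fun N => hKc.inter (hSclosed N))
  refine ⟨γ, fun m n => ?_⟩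
  have hγN := Set.mem_iInter.mp hγ (max m.natAbs n.natAbs)
  exact hγN.2 m n (le_max_left _ _) (le_max_right _ _)
end

section
/- The set of asymptotic minors of a length space is a quasi-isometry invariant: if X and Y are quasi-isometric length spaces and H is a finite connected graph, then H is an asymptotic minor of X if and only if H is an asymptotic minor of Y. -/
open Set Metric Filter

/-- `X` is a length space: any two points are joined by continuous paths of length
arbitrarily close to their distance. -/
def IsLengthSpace (X : Type*) [MetricSpace X] : Prop :=
  ∀ x y : X, ∀ ε : ℝ, 0 < ε → ∃ f : ℝ → X, ContinuousOn f (Icc 0 1) ∧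
    f 0 = x ∧ f 1 = y ∧ eVariationOn f (Icc 0 1) ≤ ENNReal.ofReal (dist x y + ε)

/-- `U, P` form a `K`-fat `H`-minor in the metric space `X`: the branch sets `U v` are
path-connected, each edge `uv` of `H` has an edge path `P u v` joining `U u` to `U v`,
and any two pieces not required to meet are at distance `> K`. -/
def IsFatMinor {V : Type*} (H : SimpleGraph V) {X : Type*} [MetricSpace X] (K : ℝ)
    (U : V → Set X) (P : V → V → Set X) : Prop :=
  (∀ v, IsPathConnected (U v)) ∧
  (∀ u v, P u v = P v u) ∧
  (∀ u v, H.Adj u v → ∃ f : ℝ → X, ContinuousOn f (Icc 0 1) ∧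
      f '' Icc 0 1 = P u v ∧ f 0 ∈ U u ∧ f 1 ∈ U v) ∧
  (∀ u v, u ≠ v → ∀ a ∈ U u, ∀ c ∈ U v, K < dist a c) ∧
  (∀ u v w, H.Adj u v → w ≠ u → w ≠ v → ∀ a ∈ P u v, ∀ c ∈ U w, K < dist a c) ∧
  (∀ u v u' v', H.Adj u v → H.Adj u' v' → s(u, v) ≠ s(u', v') →
      ∀ a ∈ P u v, ∀ c ∈ P u' v', K < dist a c)

/-- `H` is an asymptotic minor of `X`: `X` contains `K`-fat `H`-minors for all `K ≥ 1`. -/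
def IsAsymptoticMinor {V : Type*} (H : SimpleGraph V) (X : Type*) [MetricSpace X] : Prop :=
  ∀ K : ℝ, 1 ≤ K → ∃ (U : V → Set X) (P : V → V → Set X), IsFatMinor H K U P

/-- `φ` is a `lam`-quasi-isometry. -/
def IsQI {X Y : Type*} [MetricSpace X] [MetricSpace Y] (lam : ℝ) (φ : X → Y) : Prop :=
  (∀ x x' : X, (1 / lam) * dist x x' - lam ≤ dist (φ x) (φ x') ∧
    dist (φ x) (φ x') ≤ lam * dist x x' + lam) ∧
  ∀ y : Y, ∃ x : X, dist y (φ x) ≤ lam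


lemma length_path {Y : Type*} [MetricSpace Y] (hY : IsLengthSpace Y) (a b : Y) :
    ∃ p : Path a b, ∀ y ∈ range p, dist y a ≤ dist a b + 1 := by
  obtain ⟨f, hc, hf0, hf1, hvar⟩ := hY a b 1 one_pos
  refine ⟨⟨⟨fun t => f t.1, hc.restrict⟩, by simpa using hf0, by simpa using hf1⟩, ?_⟩
  rintro y ⟨t, rfl⟩
  have h1 : edist (f t.1) (f 0) ≤ eVariationOn f (Icc 0 1) :=
    eVariationOn.edist_le f t.2 (by constructor <;> norm_num)
  have h2 : edist (f t.1) (f 0) ≤ ENNReal.ofReal (dist a b + 1) := h1.trans hvar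
  rw [edist_dist] at h2
  have h3 : dist (f t.1) (f 0) ≤ dist a b + 1 := by
    rw [ENNReal.ofReal_le_ofReal_iff (by positivity)] at h2
    exact h2
  show dist (f t.1) a ≤ dist a b + 1
  simpa [hf0] using h3

/-- Fill in a chain of nearby points by a path staying near the chain. -/


lemma chain_path {Y : Type*} [MetricSpace Y] (hY : IsLengthSpace Y) (c : ℕ → Y) (D : ℝ)
    (hD : 0 ≤ D) (n : ℕ) (hc : ∀ i < n, dist (c i) (c (i + 1)) ≤ D) :
    ∃ p : Path (c 0) (c n), ∀ y ∈ range p, ∃ i ≤ n, dist y (c i) ≤ D + 1 := by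
  induction n with
  | zero =>
    refine ⟨Path.refl (c 0), ?_⟩
    intro y hy
    rw [Path.refl_range] at hy
    exact ⟨0, le_refl _, by rw [hy]; simp; linarith⟩
  | succ n ih =>
    obtain ⟨p, hp⟩ := ih (fun i hi => hc i (by omega))
    obtain ⟨q, hq⟩ := length_path hY (c n) (c (n + 1))
    refine ⟨p.trans q, ?_⟩
    intro y hy
    rw [Path.trans_range] at hy
    rcases hy with hy | hy
    · obtain ⟨i, hi, h⟩ := hp y hy
      exact ⟨i, by omega, h⟩
    · refine ⟨n, by omega, ?_⟩
      have := hq y hy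
      have := hc n (by omega)
      linarith

/-- coarse neighbourhood of the image of a set -/
def nbhd {X Y : Type*} [MetricSpace X] [MetricSpace Y] (φ : X → Y) (lam : ℝ) (S : Set X) :
    Set Y := {y | ∃ x ∈ S, dist y (φ x) ≤ 2 * lam + 1}


lemma quasi_path {X Y : Type*} [MetricSpace X] [MetricSpace Y] (hY : IsLengthSpace Y)
    {lam : ℝ} (hlam : 1 ≤ lam) {φ : X → Y} (hφ : IsQI lam φ)
    {a b : X} {S : Set X} (hj : JoinedIn S a b) :
    ∃ q : Path (φ a) (φ b), range q ⊆ nbhd φ lam S := by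
  have hl0 : (0:ℝ) < lam := lt_of_lt_of_le one_pos hlam
  obtain ⟨p, hpS⟩ := hj
  have huc : UniformContinuous p := CompactSpace.uniformContinuous_of_continuous p.continuous
  obtain ⟨δ, hδ, hδ'⟩ := Metric.uniformContinuous_iff.mp huc 1 one_pos
  obtain ⟨n, hn⟩ := exists_nat_one_div_lt hδ
  set N : ℕ := n + 1 with hN
  have hN0 : (0:ℝ) < (N : ℝ) := by positivity
  set T : ℕ → unitInterval := fun i => Set.projIcc 0 1 zero_le_one ((i : ℝ) / N) with hT
  set c : ℕ → Y := fun i => φ (p (T i)) with hcdef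
  have hchain : ∀ i < N, dist (c i) (c (i + 1)) ≤ 2 * lam := by
    intro i hi
    have h1 : (i : ℝ) / N ∈ Icc (0:ℝ) 1 := by
      constructor
      · positivity
      · rw [div_le_one hN0]; exact_mod_cast le_of_lt hi
    have h2 : ((i + 1 : ℕ) : ℝ) / N ∈ Icc (0:ℝ) 1 := by
      constructor
      · positivity
      · rw [div_le_one hN0]; exact_mod_cast hi
    have hd : dist (T i) (T (i + 1)) < δ := by
      rw [hT]
      simp only
      rw [Set.projIcc_of_mem _ h1, Set.projIcc_of_mem _ h2, Subtype.dist_eq]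
      have heq : dist ((i : ℝ) / N) (((i + 1 : ℕ) : ℝ) / N) = 1 / N := by
        rw [Real.dist_eq, div_sub_div_same, Nat.cast_add, Nat.cast_one,
          show (i : ℝ) - ((i : ℝ) + 1) = -1 by ring,
          abs_div, abs_neg, abs_one, abs_of_pos hN0]
      rw [heq]
      have : (1 : ℝ) / (N : ℝ) < δ := by rw [hN]; push_cast; exact hn
      exact this
    have hpd : dist (p (T i)) (p (T (i + 1))) < 1 := hδ' hd
    have := (hφ.1 (p (T i)) (p (T (i + 1)))).2
    rw [hcdef]
    simp only
    nlinarith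
  obtain ⟨q, hq⟩ := chain_path hY c (2 * lam) (by linarith) N hchain
  have hc0 : c 0 = φ a := by
    have : T 0 = 0 := by
      rw [hT]; simp only [Nat.cast_zero, zero_div]
      exact Set.projIcc_left _
    rw [hcdef]; simp only [this, p.source]
  have hcN : c N = φ b := by
    have : T N = 1 := by
      rw [hT]; simp only [div_self (ne_of_gt hN0)]
      exact Set.projIcc_right _
    rw [hcdef]; simp only [this, p.target]
  refine ⟨q.cast hc0.symm hcN.symm, ?_⟩
  intro y hy
  have hy' : y ∈ range q := by
    simpa [Path.cast] using hy
  obtain ⟨i, hi, h⟩ := hq y hy'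
  exact ⟨p (T i), hpS (T i), h⟩


lemma sep_lemma {X Y : Type*} [MetricSpace X] [MetricSpace Y] {lam K : ℝ}
    (hlam : 1 ≤ lam) (hK : 1 ≤ K) {φ : X → Y} (hφ : IsQI lam φ) {A B : Set X}
    (hAB : ∀ a ∈ A, ∀ b ∈ B, lam * (K + 8 * lam) < dist a b) :
    ∀ y ∈ nbhd φ lam A, ∀ y' ∈ nbhd φ lam B, K < dist y y' := by
  have hl0 : (0:ℝ) < lam := lt_of_lt_of_le one_pos hlam
  rintro y ⟨x, hx, hyx⟩ y' ⟨x', hx', hyx'⟩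
  have h1 := (hφ.1 x x').1
  have h2 := hAB x hx x' hx'
  have h3 : (1 / lam) * (lam * (K + 8 * lam)) < (1 / lam) * dist x x' :=
    mul_lt_mul_of_pos_left h2 (by positivity)
  have h4 : (1 / lam) * (lam * (K + 8 * lam)) = K + 8 * lam := by field_simp
  have h5 := dist_triangle4 (φ x) y y' (φ x')
  have h6 : dist (φ x) y = dist y (φ x) := dist_comm _ _
  have h7 : dist y' (φ x') = dist y' (φ x') := rfl
  linarith


lemma transfer {V : Type*} (H : SimpleGraph V) {X Y : Type*} [MetricSpace X] [MetricSpace Y]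
    (hY : IsLengthSpace Y) {lam : ℝ} (hlam : 1 ≤ lam) {φ : X → Y} (hφ : IsQI lam φ)
    (h : IsAsymptoticMinor H X) : IsAsymptoticMinor H Y := by
  classical
  intro K hK
  have hl0 : (0:ℝ) < lam := lt_of_lt_of_le one_pos hlam
  set K' : ℝ := lam * (K + 8 * lam) with hK'def
  have hK' : 1 ≤ K' := by nlinarith
  obtain ⟨U, P, hUc, hPsym, hPpath, hUU, hPU, hPP⟩ := h K' hK'
  have sep : ∀ (A B : Set X), (∀ a ∈ A, ∀ b ∈ B, K' < dist a b) →
      ∀ y ∈ nbhd φ lam A, ∀ y' ∈ nbhd φ lam B, K < dist y y' :=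
    fun A B hAB => sep_lemma hlam hK hφ hAB
  -- base points of branch sets
  have hbase : ∀ v, ∃ x ∈ U v, ∀ x' ∈ U v, JoinedIn (U v) x x' := by
    intro v
    obtain ⟨x, hx, hj⟩ := hUc v
    exact ⟨x, hx, fun x' hx' => hj hx'⟩
  choose xb hxbmem hxbjoin using hbase
  -- paths in Y connecting images of points of branch sets to the image of base point
  have hQ : ∀ v, ∀ x, x ∈ U v → ∃ q : Path (φ (xb v)) (φ x),
      range q ⊆ nbhd φ lam (U v) :=
    fun v x hx => quasi_path hY hlam hφ (hxbjoin v x hx)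
  choose Q hQmem using hQ
  set U' : V → Set Y := fun v => {y | ∃ x, ∃ hx : x ∈ U v, y ∈ range (Q v x hx)} with hU'def
  have hU'sub : ∀ v, U' v ⊆ nbhd φ lam (U v) := by
    rintro v y ⟨x, hx, hy⟩
    exact hQmem v x hx hy
  have hU'mem : ∀ v, ∀ x, ∀ hx : x ∈ U v, φ x ∈ U' v :=
    fun v x hx => ⟨x, hx, ⟨1, (Q v x hx).target⟩⟩
  have hU'pc : ∀ v, IsPathConnected (U' v) := by
    intro v
    refine ⟨φ (xb v), ⟨xb v, hxbmem v, ⟨0, (Q v (xb v) (hxbmem v)).source⟩⟩, ?_⟩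
    intro y hy
    obtain ⟨x, hx, hyr⟩ := hy
    have hrsub : range (Q v x hx) ⊆ U' v := fun z hz => ⟨x, hx, hz⟩
    have hrpc : IsPathConnected (range (Q v x hx)) := by
      have hpc : PathConnectedSpace unitInterval :=
        isPathConnected_iff_pathConnectedSpace.mp
          ((convex_Icc (0:ℝ) 1).isPathConnected (nonempty_Icc.mpr zero_le_one))
      exact isPathConnected_range (Q v x hx).continuous
    exact (hrpc.joinedIn _ ⟨0, (Q v x hx).source⟩ _ hyr).mono hrsub
  -- edge paths
  have hEdge : ∀ u v, H.Adj u v → ∃ g : ℝ → Y, ContinuousOn g (Icc 0 1) ∧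
      g 0 ∈ U' u ∧ g 1 ∈ U' v ∧ g '' Icc 0 1 ⊆ nbhd φ lam (P u v) := by
    intro u v huv
    obtain ⟨f, hfc, hfim, hf0, hf1⟩ := hPpath u v huv
    have hj : JoinedIn (P u v) (f 0) (f 1) := by
      refine ⟨⟨⟨fun t => f t.1, hfc.restrict⟩, by simp, by simp⟩, ?_⟩
      intro t
      rw [← hfim]
      exact Set.mem_image_of_mem f t.2
    obtain ⟨q, hq⟩ := quasi_path hY hlam hφ hj
    refine ⟨fun t => q (Set.projIcc 0 1 zero_le_one t), ?_, ?_, ?_, ?_⟩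
    · exact (q.continuous.comp continuous_projIcc).continuousOn
    · show q (Set.projIcc (0:ℝ) 1 zero_le_one 0) ∈ U' u
      rw [Set.projIcc_left, show (⟨0, by norm_num⟩ : unitInterval) = 0 from rfl, q.source]
      exact hU'mem u (f 0) hf0
    · show q (Set.projIcc (0:ℝ) 1 zero_le_one 1) ∈ U' v
      rw [Set.projIcc_right, show (⟨1, by norm_num⟩ : unitInterval) = 1 from rfl, q.target]
      exact hU'mem v (f 1) hf1
    · rintro y ⟨t, _, rfl⟩
      exact hq ⟨_, rfl⟩
  choose g hgc hg0 hg1 hgsub using hEdge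
  haveI : IsWellOrder V WellOrderingRel := WellOrderingRel.isWellOrder
  letI lo : LinearOrder V := IsWellOrder.linearOrder WellOrderingRel
  let R : V → V → Set Y := fun u v => if h : H.Adj u v then g u v h '' Icc 0 1 else ∅
  let P' : V → V → Set Y := fun u v => if lo.le u v then R u v else R v u
  have hR : ∀ u v (h : H.Adj u v), R u v = g u v h '' Icc 0 1 := fun u v h => dif_pos h
  have hRe : ∀ u v, ¬ H.Adj u v → R u v = ∅ := fun u v h => dif_neg h
  have hP1 : ∀ u v, lo.le u v → P' u v = R u v := fun u v h => if_pos h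
  have hP2 : ∀ u v, ¬ lo.le u v → P' u v = R v u := fun u v h => if_neg h
  have hRsub : ∀ u v, R u v ⊆ nbhd φ lam (P u v) := by
    intro u v
    by_cases h : H.Adj u v
    · rw [hR u v h]; exact hgsub u v h
    · rw [hRe u v h]; exact empty_subset _
  have hP'sub : ∀ u v, P' u v ⊆ nbhd φ lam (P u v) := by
    intro u v
    by_cases h : lo.le u v
    · rw [hP1 u v h]; exact hRsub u v
    · rw [hP2 u v h, hPsym u v]; exact hRsub v u
  refine ⟨U', P', hU'pc, ?_, ?_, ?_, ?_, ?_⟩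
  · -- symmetry of P'
    intro u v
    rcases lo.le_total u v with hle | hle
    · by_cases hlt : lo.le v u
      · have huv : u = v := lo.le_antisymm _ _ hle hlt
        rw [huv]
      · rw [hP1 u v hle, hP2 v u hlt]
    · by_cases hlt : lo.le u v
      · have huv : u = v := lo.le_antisymm _ _ hlt hle
        rw [huv]
      · rw [hP2 u v hlt, hP1 v u hle]
  · -- edge paths
    intro u v huv
    by_cases hle : lo.le u v
    · refine ⟨g u v huv, hgc u v huv, ?_, hg0 u v huv, hg1 u v huv⟩
      rw [hP1 u v hle, hR u v huv]
    · refine ⟨fun t => g v u huv.symm (1 - t), ?_, ?_, ?_, ?_⟩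
      · apply (hgc v u huv.symm).comp
          ((continuous_const.sub continuous_id).continuousOn)
        intro t ht
        show 1 - t ∈ Icc (0:ℝ) 1
        exact ⟨by linarith [ht.2], by linarith [ht.1]⟩
      · have him : (fun t : ℝ => (1:ℝ) - t) '' Icc 0 1 = Icc 0 1 := by
          rw [Set.image_const_sub_Icc]
          norm_num
        rw [hP2 u v hle, hR v u huv.symm]
        calc (fun t => g v u huv.symm (1 - t)) '' Icc 0 1
            = g v u huv.symm '' ((fun t : ℝ => (1:ℝ) - t) '' Icc 0 1) := by
              rw [← Set.image_comp]; rfl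
          _ = g v u huv.symm '' Icc 0 1 := by rw [him]
      · simpa using hg1 v u huv.symm
      · simpa using hg0 v u huv.symm
  · -- branch sets far apart
    intro u v huv a ha c hc
    exact sep (U u) (U v) (hUU u v huv) a (hU'sub u ha) c (hU'sub v hc)
  · -- edge paths far from other branch sets
    intro u v w huv hwu hwv a ha c hc
    exact sep (P u v) (U w) (hPU u v w huv hwu hwv) a (hP'sub u v ha) c (hU'sub w hc)
  · -- edge paths far apart
    intro u v u' v' huv huv' hne a ha c hc
    exact sep (P u v) (P u' v') (hPP u v u' v' huv huv' hne) a (hP'sub u v ha) c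
      (hP'sub u' v' hc)


/-- Asymptotic minors are a quasi-isometry invariant of length spaces. -/
theorem asymptoticMinor_qi_invariant {V : Type*} [Fintype V] (H : SimpleGraph V)
    (hHconn : H.Connected)
    {X Y : Type*} [MetricSpace X] [MetricSpace Y]
    (hX : IsLengthSpace X) (hY : IsLengthSpace Y)
    (lam : ℝ) (hlam : 1 ≤ lam) (φ : X → Y) (hφ : IsQI lam φ) :
    IsAsymptoticMinor H X ↔ IsAsymptoticMinor H Y := by
  have hl0 : (0:ℝ) < lam := lt_of_lt_of_le one_pos hlam
  choose ψ hψ using hφ.2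
  have hlam2 : (1:ℝ) ≤ 4 * lam ^ 2 := by nlinarith
  have hψQI : IsQI (4 * lam ^ 2) ψ := by
    constructor
    · intro y y'
      obtain ⟨h1, h2⟩ := hφ.1 (ψ y) (ψ y')
      have e1 := hψ y
      have e2 := hψ y'
      have t1 : dist y y' ≤ lam * dist (ψ y) (ψ y') + 3 * lam := by
        have h4 := dist_triangle4 y (φ (ψ y)) (φ (ψ y')) y'
        have h5 : dist (φ (ψ y')) y' = dist y' (φ (ψ y')) := dist_comm _ _
        have h6 : dist y (φ (ψ y)) = dist y (φ (ψ y)) := rfl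
        linarith [dist_comm y (φ (ψ y)) ▸ h4]
      have t2 : dist (φ (ψ y)) (φ (ψ y')) ≤ dist y y' + 2 * lam := by
        have h4 := dist_triangle4 (φ (ψ y)) y y' (φ (ψ y'))
        have h5 : dist (φ (ψ y)) y = dist y (φ (ψ y)) := dist_comm _ _
        have h6 : dist y' (φ (ψ y')) = dist y' (φ (ψ y')) := rfl
        linarith
      constructor
      · -- lower bound
        have key : dist y y' ≤ (dist (ψ y) (ψ y') + 4 * lam ^ 2) * (4 * lam ^ 2) := by
          nlinarith [dist_nonneg (x := ψ y) (y := ψ y'), dist_nonneg (x := y) (y := y')]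
        rw [sub_le_iff_le_add, one_div_mul_eq_div, div_le_iff₀ (by positivity)]
        exact key
      · -- upper bound
        have h7 : (1 / lam) * dist (ψ y) (ψ y') ≤ dist y y' + 3 * lam := by linarith
        have h8 : lam * ((1 / lam) * dist (ψ y) (ψ y')) = dist (ψ y) (ψ y') := by
          field_simp
        have h9 := mul_le_mul_of_nonneg_left h7 hl0.le
        rw [h8] at h9
        nlinarith [mul_nonneg (by nlinarith : (0:ℝ) ≤ 4 * lam ^ 2 - lam)
          (dist_nonneg (x := y) (y := y'))]
    · intro x
      refine ⟨φ x, ?_⟩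
      have e := hψ (φ x)
      have h1 := (hφ.1 x (ψ (φ x))).1
      have h7 : (1 / lam) * dist x (ψ (φ x)) ≤ 2 * lam := by linarith
      have h8 : lam * ((1 / lam) * dist x (ψ (φ x))) = dist x (ψ (φ x)) := by field_simp
      have h9 := mul_le_mul_of_nonneg_left h7 hl0.le
      rw [h8] at h9
      nlinarith
  constructor
  · exact transfer H hY hlam hφ
  · exact transfer H hX hlam2 hψQI
end

section
/- In a length space that is one-ended in the coarse sense, a K-fat complete-graph minor can be extended: if X is a length space such that for every bounded set B the complement X \ B has exactly one unbounded connected component, M ⊂ X is a 10(K+B)-fat K_m-minor contained in a subset Y on which a group acts B-coboundedly, and there is a geodesic ray ρ normal to Y, then X contains a K-fat K_{m+1}-minor. -/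
open Set Metric Filter

lemma aux_pc_iUnion {X : Type*} [TopologicalSpace X] {ι : Sort*} [Nonempty ι] {S : ι → Set X}
    {x : X} (h : ∀ i, IsPathConnected (S i)) (hx : ∀ i, x ∈ S i) :
    IsPathConnected (⋃ i, S i) := by
  refine ⟨x, mem_iUnion.2 ⟨Classical.arbitrary ι, hx _⟩, fun {y} hy => ?_⟩
  obtain ⟨i, hi⟩ := mem_iUnion.1 hy
  exact ((h i).joinedIn x (hx i) y hi).mono (subset_iUnion S i)

lemma aux_length_path {X : Type*} [MetricSpace X] (hlen : IsLengthSpace X) (x y : X) {ε : ℝ}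
    (hε : 0 < ε) : ∃ f : ℝ → X, ContinuousOn f (Icc 0 1) ∧ f 0 = x ∧ f 1 = y ∧
      ∀ t ∈ Icc (0:ℝ) 1, dist (f t) x ≤ dist x y + ε := by
  obtain ⟨f, hf, h0, h1, hvar⟩ := hlen x y ε hε
  refine ⟨f, hf, h0, h1, fun t ht => ?_⟩
  have h2 : edist (f t) (f 0) ≤ ENNReal.ofReal (dist x y + ε) :=
    le_trans (eVariationOn.edist_le f ht (left_mem_Icc.mpr zero_le_one)) hvar
  rw [h0, edist_dist] at h2
  exact (ENNReal.ofReal_le_ofReal_iff (by positivity)).1 h2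

lemma aux_locPathConnected {X : Type*} [MetricSpace X] (hlen : IsLengthSpace X) :
    LocPathConnectedSpace X := by
  refine LocPathConnectedSpace.of_bases (ι := ℝ) (p := fun _ r => 0 < r)
    (s := fun x r => {y | ∃ f : ℝ → X, ContinuousOn f (Icc 0 1) ∧ f 0 = x ∧ f 1 = y ∧
      ∀ t ∈ Icc (0:ℝ) 1, f t ∈ ball x r}) ?_ ?_
  · intro x
    refine (Metric.nhds_basis_ball (x := x)).to_hasBasis ?_ ?_
    · intro r hr
      refine ⟨r, hr, fun y hy => ?_⟩
      obtain ⟨f, -, -, h1, hb⟩ := hy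
      exact h1 ▸ hb 1 (right_mem_Icc.mpr zero_le_one)
    · intro r hr
      refine ⟨r/2, by linarith, fun y hy => ?_⟩
      rw [mem_ball, dist_comm] at hy
      have hε : (0:ℝ) < (r - dist x y)/2 := by linarith
      obtain ⟨f, hf, h0, h1, hb⟩ := aux_length_path hlen x y hε
      refine ⟨f, hf, h0, h1, fun t ht => ?_⟩
      have := hb t ht
      rw [mem_ball]
      linarith
  · intro x r hr
    refine ⟨x, ⟨fun _ => x, continuousOn_const, rfl, rfl,
      fun t _ => mem_ball_self hr⟩, fun {y} hy => ?_⟩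
    obtain ⟨f, hf, h0, h1, hb⟩ := hy
    have hcont : Continuous fun t : unitInterval => f ↑t :=
      hf.comp_continuous continuous_subtype_val (fun a => a.2)
    refine ⟨⟨⟨fun t : unitInterval => f ↑t, hcont⟩, by simp [h0], by simp [h1]⟩, fun t => ?_⟩
    refine ⟨fun u => f (u * ↑t), ?_, by simp [h0], by simp, fun u hu => hb _ ?_⟩
    · refine hf.comp ((continuous_mul_right _).continuousOn) ?_
      intro u hu
      exact ⟨mul_nonneg hu.1 t.2.1, mul_le_one₀ hu.2 t.2.1 t.2.2⟩
    · exact ⟨mul_nonneg hu.1 t.2.1, mul_le_one₀ hu.2 t.2.1 t.2.2⟩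

lemma aux_affine_image (c d : ℝ) (hcd : c ≤ d) :
    (fun t : ℝ => c + t * (d - c)) '' Icc 0 1 = Icc c d := by
  ext s
  simp only [mem_image, mem_Icc]
  constructor
  · rintro ⟨t, ⟨ht0, ht1⟩, rfl⟩
    constructor <;> nlinarith
  · intro hs
    rcases eq_or_lt_of_le hcd with rfl | h
    · exact ⟨0, ⟨le_refl 0, zero_le_one⟩, by simpa using (le_antisymm hs.2 hs.1).symm⟩
    · refine ⟨(s - c)/(d - c), ⟨div_nonneg (by linarith [hs.1]) (by linarith), ?_⟩, ?_⟩
      · rw [div_le_one (by linarith)]; linarith [hs.2]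
      · rw [div_mul_eq_mul_div, mul_div_assoc, div_self (by linarith), mul_one]; ring

lemma aux_affine_image' (c d : ℝ) (hcd : c ≤ d) :
    (fun t : ℝ => d + t * (c - d)) '' Icc 0 1 = Icc c d := by
  ext s
  simp only [mem_image, mem_Icc]
  constructor
  · rintro ⟨t, ⟨ht0, ht1⟩, rfl⟩
    constructor <;> nlinarith
  · intro hs
    rcases eq_or_lt_of_le hcd with rfl | h
    · exact ⟨0, ⟨le_refl 0, zero_le_one⟩, by simpa using (le_antisymm hs.2 hs.1).symm⟩
    · refine ⟨(d - s)/(d - c), ⟨div_nonneg (by linarith [hs.2]) (by linarith), ?_⟩, ?_⟩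
      · rw [div_le_one (by linarith)]; linarith [hs.1]
      · have : (d - s)/(d - c) * (c - d) = -(d - s) := by
          rw [div_mul_eq_mul_div]
          rw [show (c - d) = -(d-c) by ring, mul_neg, neg_div, mul_div_assoc,
            div_self (by linarith), mul_one]
        rw [this]; ring

/-- In a one-ended length space, a `10(K+B)`-fat `K_m`-minor lying in a subset `Y`, on
which a group acts `B`-coboundedly by isometries, together with a geodesic ray normal to
`Y`, can be extended to a `K`-fat `K_{m+1}`-minor. -/
theorem fatMinor_extend_one_ended {X : Type*} [MetricSpace X] (hlen : IsLengthSpace X)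
    (hone : ∀ C : Set X, Bornology.IsBounded C →
      ∃! W : Set X, (∃ x ∈ Cᶜ, W = connectedComponentIn Cᶜ x) ∧ ¬ Bornology.IsBounded W)
    (G : Type*) [Group G] [MulAction G X]
    (hiso : ∀ g : G, Isometry (fun x : X => g • x))
    (Y : Set X) (hYinv : ∀ g : G, (fun x : X => g • x) '' Y = Y)
    (B : ℝ) (hB : 0 < B) (y₀ : X) (hy₀ : y₀ ∈ Y)
    (hcobound : ∀ y ∈ Y, ∃ g : G, dist y (g • y₀) ≤ B)
    (ρ : ℝ → X)
    (hρgeo : ∀ s t : ℝ, 0 ≤ s → 0 ≤ t → dist (ρ s) (ρ t) = |s - t|)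
    (hρ0 : ρ 0 ∈ Y) (hρnormal : ∀ t : ℝ, 0 ≤ t → infDist (ρ t) Y = t)
    (m : ℕ) (K : ℝ) (hK : 1 ≤ K)
    (U : Fin m → Set X) (P : Fin m → Fin m → Set X)
    (hfat : IsFatMinor (⊤ : SimpleGraph (Fin m)) (10 * (K + B)) U P)
    (hUY : ∀ v, U v ⊆ Y)
    (hPY : ∀ u v : Fin m, u ≠ v → P u v ⊆ Y) :
    ∃ (U' : Fin (m + 1) → Set X) (P' : Fin (m + 1) → Fin (m + 1) → Set X),
      IsFatMinor (⊤ : SimpleGraph (Fin (m + 1))) K U' P' := by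
  classical
  obtain ⟨hUpc, hPsymm, hPedge, hUU, hPU, hPP⟩ := hfat
  haveI : LocallyPathConnectedSpace X := aux_locPathConnected hlen
  -- base points of the branch sets
  have hbase : ∀ v : Fin m, ∃ x, x ∈ U v := fun v => (isPathConnected_iff.mp (hUpc v)).1
  choose y hyU using hbase
  have hyY : ∀ v, y v ∈ Y := fun v => hUY v (hyU v)
  have hyy : ∀ u v : Fin m, u ≠ v → 10*(K+B) < dist (y u) (y v) :=
    fun u v h => hUU u v h _ (hyU u) _ (hyU v)
  -- edge path parametrizations
  have hFex : ∀ u v : Fin m, ∃ f : ℝ → X, u ≠ v → (ContinuousOn f (Icc 0 1) ∧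
      f '' Icc 0 1 = P u v ∧ f 0 ∈ U u ∧ f 1 ∈ U v) := by
    intro u v
    by_cases h : u ≠ v
    · obtain ⟨f, hf⟩ := hPedge u v ((SimpleGraph.top_adj u v).mpr h)
      exact ⟨f, fun _ => hf⟩
    · exact ⟨fun _ => y u, fun h' => absurd h' h⟩
  choose F hFspec using hFex
  -- group elements giving rays near the base points
  choose gv hgv using fun v : Fin m => hcobound (y v) (hyY v)
  obtain ⟨g0, hg0⟩ := hcobound (ρ 0) hρ0
  set k : Fin m → G := fun v => gv v * g0⁻¹ with hk
  set σ : Fin m → ℝ → X := fun v t => k v • ρ t with hσ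
  have hdistg : ∀ (g : G) (x z : X), dist (g • x) (g • z) = dist x z :=
    fun g x z => (hiso g).dist_eq x z
  have hσdist : ∀ v (s t : ℝ), 0 ≤ s → 0 ≤ t → dist (σ v s) (σ v t) = |s - t| := by
    intro v s t hs ht
    rw [hσ]
    simp only
    rw [hdistg]
    exact hρgeo s t hs ht
  have hσ0y : ∀ v, dist (σ v 0) (y v) ≤ 2*B := by
    intro v
    have h1 : dist (σ v 0) (gv v • y₀) = dist (ρ 0) (g0 • y₀) := by
      have h2 : σ v 0 = gv v • (g0⁻¹ • ρ 0) := by rw [hσ, hk]; simp only; rw [mul_smul]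
      rw [h2, hdistg, ← hdistg g0, smul_inv_smul]
    calc dist (σ v 0) (y v) ≤ dist (σ v 0) (gv v • y₀) + dist (gv v • y₀) (y v) :=
          dist_triangle _ _ _
      _ ≤ B + B := by
          rw [h1, dist_comm (gv v • y₀)]
          exact add_le_add hg0 (hgv v)
      _ = 2*B := by ring
  -- invariance of the distance to Y
  have hmemY : ∀ (g : G) z, z ∈ Y → g • z ∈ Y := by
    intro g z hz
    rw [← hYinv g]
    exact ⟨z, hz, rfl⟩
  have hle : ∀ (g : G) (x : X), infDist (g • x) Y ≤ infDist x Y := by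
    intro g x
    by_contra hlt
    push_neg at hlt
    obtain ⟨z, hz, hdz⟩ := (infDist_lt_iff ⟨y₀, hy₀⟩).mp hlt
    have h2 : infDist (g • x) Y ≤ dist (g • x) (g • z) := infDist_le_dist_of_mem (hmemY g z hz)
    rw [hdistg] at h2
    linarith
  have hinf : ∀ (g : G) (x : X), infDist (g • x) Y = infDist x Y := by
    intro g x
    refine le_antisymm (hle g x) ?_
    have h2 := hle g⁻¹ (g • x)
    rwa [inv_smul_smul] at h2
  have hσY : ∀ v (t : ℝ), 0 ≤ t → infDist (σ v t) Y = t := by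
    intro v t ht
    rw [hσ]
    simp only
    rw [hinf]
    exact hρnormal t ht
  have hρcont : ContinuousOn ρ (Ici (0:ℝ)) := by
    refine LipschitzOnWith.continuousOn (K := 1) ?_
    rw [lipschitzOnWith_iff_dist_le_mul]
    intro s hs t ht
    rw [hρgeo s t hs ht, Real.dist_eq]
    simp
  have hσcont : ∀ v, ContinuousOn (σ v) (Ici (0:ℝ)) :=
    fun v => (hiso (k v)).continuous.comp_continuousOn hρcont
  -- constants
  have hK0 : (0:ℝ) < K := lt_of_lt_of_le one_pos hK
  set e : ℝ := K/10 with he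
  have he0 : 0 < e := by rw [he]; positivity
  set aa : ℝ := K + e with haa
  set Rr : ℝ := 2*K + 3*e + 2*B with hRr
  set bb : ℝ := Rr + e with hbb
  have haa0 : 0 < aa := by rw [haa]; linarith
  have hRr0 : (0:ℝ) < Rr := by rw [hRr]; linarith
  have hbb0 : (0:ℝ) < bb := by rw [hbb]; linarith
  have haabb : aa ≤ bb := by rw [haa, hbb, hRr]; linarith
  -- connecting paths from base points to ray starts
  have hAex : ∀ v, ∃ f : ℝ → X, ContinuousOn f (Icc 0 1) ∧ f 0 = y v ∧ f 1 = σ v 0 ∧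
      ∀ t ∈ Icc (0:ℝ) 1, dist (f t) (y v) ≤ 2*B + e := by
    intro v
    obtain ⟨f, hf, h0, h1, hb⟩ := aux_length_path hlen (y v) (σ v 0) he0
    refine ⟨f, hf, h0, h1, fun t ht => le_trans (hb t ht) ?_⟩
    have h2 := hσ0y v
    rw [dist_comm] at h2
    linarith
  choose Af hAfc hAf0 hAf1 hAfb using hAex
  -- bounded path-connected pieces of the branch sets containing the needed points
  have hq1 : ∀ u v : Fin m, ∃ q, q ∈ U u ∧ (u ≠ v → q = F u v 0) := by
    intro u v
    by_cases h : u ≠ v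
    · exact ⟨F u v 0, (hFspec u v h).2.2.1, fun _ => rfl⟩
    · exact ⟨y u, hyU u, fun h' => absurd h' h⟩
  have hq2 : ∀ u v : Fin m, ∃ q, q ∈ U u ∧ (v ≠ u → q = F v u 1) := by
    intro u v
    by_cases h : v ≠ u
    · exact ⟨F v u 1, (hFspec v u h).2.2.2, fun _ => rfl⟩
    · exact ⟨y u, hyU u, fun h' => absurd h' h⟩
  choose q1 hq1U hq1e using hq1
  choose q2 hq2U hq2e using hq2
  have hSex : ∀ (u : Fin m) (q : X), q ∈ U u → ∃ S : Set X, IsPathConnected S ∧ S ⊆ U u ∧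
      y u ∈ S ∧ q ∈ S ∧ Bornology.IsBounded S := by
    intro u q hq
    obtain ⟨γ, hγ⟩ := (hUpc u).joinedIn (y u) (hyU u) q hq
    refine ⟨γ.extend '' Icc 0 1, ?_, ?_, ⟨0, ⟨le_refl 0, zero_le_one⟩, γ.extend_zero⟩,
      ⟨1, ⟨zero_le_one, le_refl 1⟩, γ.extend_one⟩,
      (isCompact_Icc.image_of_continuousOn γ.continuous_extend.continuousOn).isBounded⟩
    · exact ((convex_Icc (0:ℝ) 1).isPathConnected ⟨0, le_refl 0, zero_le_one⟩).image'
        γ.continuous_extend.continuousOn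
    · rintro x ⟨t, ht, rfl⟩
      rw [γ.extend_apply ht]
      exact hγ _
  choose S1 hS1pc hS1U hS1y hS1q hS1b using fun u v => hSex u (q1 u v) (hq1U u v)
  choose S2 hS2pc hS2U hS2y hS2q hS2b using fun u v => hSex u (q2 u v) (hq2U u v)
  set Uh : Fin m → Set X := fun u => ⋃ v, (S1 u v ∪ S2 u v) with hUh
  set Aset : Fin m → Set X := fun v => Af v '' Icc 0 1 with hAset
  set Rset : Fin m → Set X := fun v => σ v '' Icc 0 aa with hRset
  set Ub : Fin m → Set X := fun v => Uh v ∪ (Aset v ∪ Rset v) with hUbd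
  set Qset : Fin m → Set X := fun v => σ v '' Icc aa bb with hQsetd
  set M : Set X := (⋃ u, Uh u) ∪ ⋃ u, ⋃ v, (if u = v then (∅ : Set X) else P u v) with hM
  -- basic facts about M
  have hUhU : ∀ u, Uh u ⊆ U u := by
    intro u
    rw [hUh]
    simp only [iUnion_subset_iff]
    intro v
    exact union_subset (hS1U u v) (hS2U u v)
  have hUhy : ∀ u, y u ∈ Uh u := by
    intro u
    rw [hUh]
    exact mem_iUnion.2 ⟨u, Or.inl (hS1y u u)⟩
  have hUhM : ∀ u, Uh u ⊆ M := fun u hx => by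
    rw [hM]; exact fun h => Or.inl (mem_iUnion.2 ⟨u, h⟩)
  have hyM : ∀ v, y v ∈ M := fun v => hUhM v (hUhy v)
  have hPM : ∀ u v : Fin m, u ≠ v → P u v ⊆ M := by
    intro u v huv p hp
    rw [hM]
    refine Or.inr (mem_iUnion.2 ⟨u, mem_iUnion.2 ⟨v, ?_⟩⟩)
    rw [if_neg huv]
    exact hp
  have hMY : M ⊆ Y := by
    rw [hM]
    intro x hx
    rcases hx with hx | hx
    · obtain ⟨u, hu⟩ := mem_iUnion.1 hx
      exact hUY u (hUhU u hu)
    · obtain ⟨u, hu⟩ := mem_iUnion.1 hx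
      obtain ⟨v, hv⟩ := mem_iUnion.1 hu
      by_cases h : u = v
      · rw [if_pos h] at hv
        exact absurd hv (notMem_empty x)
      · rw [if_neg h] at hv
        exact hPY u v h hv
  have hMb : Bornology.IsBounded M := by
    rw [hM]
    refine Bornology.IsBounded.union ?_ ?_
    · refine Bornology.isBounded_iUnion.mpr fun u => ?_
      rw [hUh]
      exact Bornology.isBounded_iUnion.mpr fun v => (hS1b u v).union (hS2b u v)
    · refine Bornology.isBounded_iUnion.mpr fun u => ?_
      refine Bornology.isBounded_iUnion.mpr fun v => ?_
      by_cases h : u = v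
      · rw [if_pos h]
        exact Bornology.isBounded_empty
      · rw [if_neg h, ← (hFspec u v h).2.1]
        exact (isCompact_Icc.image_of_continuousOn (hFspec u v h).1).isBounded
  -- the unbounded complementary component
  set C : Set X := cthickening Rr M with hC
  have hCb : Bornology.IsBounded C := hMb.cthickening
  obtain ⟨W, hWmain, hWuniq⟩ := hone C hCb
  obtain ⟨⟨x₀, hx₀, hWeq⟩, hWunb⟩ := hWmain
  have hCopen : IsOpen Cᶜ := (isClosed_cthickening).isOpen_compl
  have hWopen : IsOpen W := by rw [hWeq]; exact hCopen.connectedComponentIn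
  have hWconn : IsConnected W := by
    rw [hWeq]
    exact isConnected_connectedComponentIn_iff.mpr hx₀
  have hWpc : IsPathConnected W := (hWopen.isConnected_iff_isPathConnected).mp hWconn
  have hWC : W ⊆ Cᶜ := by rw [hWeq]; exact connectedComponentIn_subset _ _
  have hWfar : ∀ w ∈ W, ∀ p ∈ M, Rr < dist w p := by
    intro w hw p hp
    by_contra hle'
    push_neg at hle'
    exact (hWC hw) (mem_cthickening_of_dist_le w p Rr M hp hle')
  have hhigh : ∀ v (t : ℝ), Rr < t → σ v t ∈ Cᶜ := by
    intro v t hRt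
    have hinfE : ENNReal.ofReal t ≤ EMetric.infEdist (σ v t) M := by
      refine EMetric.le_infEdist.mpr fun p hp => ?_
      rw [edist_dist]
      refine ENNReal.ofReal_le_ofReal ?_
      calc t = infDist (σ v t) Y := (hσY v t (by linarith)).symm
        _ ≤ dist (σ v t) p := infDist_le_dist_of_mem (hMY hp)
    simp only [mem_compl_iff]
    intro hmem
    rw [hC, mem_cthickening_iff] at hmem
    have h3 := le_trans hinfE hmem
    rw [ENNReal.ofReal_le_ofReal_iff (le_of_lt hRr0)] at h3
    linarith
  have hσbW : ∀ v, σ v bb ∈ W := by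
    intro v
    have hbC : σ v bb ∈ Cᶜ := hhigh v bb (by rw [hbb]; linarith)
    have hTsub : σ v '' Ici bb ⊆ Cᶜ := by
      rintro x ⟨t, ht, rfl⟩
      exact hhigh v t (by have h5 := mem_Ici.1 ht; rw [hbb] at h5; linarith)
    have hTconn : IsPreconnected (σ v '' Ici bb) :=
      isPreconnected_Ici.image _ ((hσcont v).mono (fun t ht => le_trans (le_of_lt hbb0) ht))
    have hTsubW : σ v '' Ici bb ⊆ connectedComponentIn Cᶜ (σ v bb) :=
      hTconn.subset_connectedComponentIn ⟨bb, self_mem_Ici, rfl⟩ hTsub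
    have hTunb : ¬ Bornology.IsBounded (connectedComponentIn Cᶜ (σ v bb)) := by
      intro hbd
      obtain ⟨r, hr⟩ := (hbd.subset hTsubW).subset_closedBall (σ v bb)
      have hmem := hr ⟨bb + |r| + 1, by simp only [mem_Ici]; linarith [abs_nonneg r], rfl⟩
      rw [mem_closedBall, hσdist v _ _ (by linarith [abs_nonneg r]) (le_of_lt hbb0),
        show bb + |r| + 1 - bb = |r| + 1 by ring, abs_of_nonneg (by linarith [abs_nonneg r])]
        at hmem
      linarith [le_abs_self r]
    have h4 := hWuniq (connectedComponentIn Cᶜ (σ v bb)) ⟨⟨σ v bb, hbC, rfl⟩, hTunb⟩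
    rw [← h4]
    exact mem_connectedComponentIn hbC
  -- pointwise distance estimates
  have hdyv : ∀ v (t : ℝ), 0 ≤ t → dist (σ v t) (y v) ≤ 2*B + t := by
    intro v t ht
    calc dist (σ v t) (y v) ≤ dist (σ v t) (σ v 0) + dist (σ v 0) (y v) := dist_triangle _ _ _
      _ ≤ t + 2*B := by
          rw [hσdist v t 0 ht (le_refl 0), sub_zero, abs_of_nonneg ht]
          linarith [hσ0y v]
      _ = 2*B + t := by ring
  have hUbpt : ∀ v x, x ∈ Ub v → (x ∈ U v ∧ x ∈ M) ∨ dist x (y v) ≤ 2*B + e + aa := by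
    intro v x hx
    rw [hUbd] at hx
    simp only [mem_union] at hx
    rcases hx with hx | hx | hx
    · exact Or.inl ⟨hUhU v hx, hUhM v hx⟩
    · rw [hAset] at hx
      obtain ⟨t, ht, rfl⟩ := hx
      exact Or.inr (by have := hAfb v t ht; linarith)
    · rw [hRset] at hx
      obtain ⟨t, ht, rfl⟩ := hx
      exact Or.inr (by have := hdyv v t ht.1; linarith [ht.2])
  have hQpt : ∀ v x, x ∈ Qset v → ∃ t, aa ≤ t ∧ t ≤ bb ∧ x = σ v t := by
    intro v x hx
    rw [hQsetd] at hx
    obtain ⟨t, ht, rfl⟩ := hx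
    exact ⟨t, ht.1, ht.2, rfl⟩
  have hQfarY : ∀ v x, x ∈ Qset v → ∀ p ∈ Y, K < dist x p := by
    intro v x hx p hp
    obtain ⟨t, ht1, ht2, hteq⟩ := hQpt v x hx
    subst hteq
    have h1 : infDist (σ v t) Y = t := hσY v t (by linarith)
    have h2 : infDist (σ v t) Y ≤ dist (σ v t) p := infDist_le_dist_of_mem hp
    linarith
  have hUbW : ∀ v x, x ∈ Ub v → ∀ w ∈ W, K < dist x w := by
    intro v x hx w hw
    rcases hUbpt v x hx with ⟨-, hxM⟩ | hxb
    · have h1 := hWfar w hw x hxM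
      rw [dist_comm w x] at h1
      linarith
    · have h1 := hWfar w hw (y v) (hyM v)
      have h2 : dist w (y v) ≤ dist w x + dist x (y v) := dist_triangle _ _ _
      have h3 : dist w x = dist x w := dist_comm _ _
      linarith
  have hUbUb : ∀ u v, u ≠ v → ∀ x, x ∈ Ub u → ∀ c, c ∈ Ub v → K < dist x c := by
    intro u v huv x hx c hc
    rcases hUbpt u x hx with ⟨hxU, -⟩ | hxb <;> rcases hUbpt v c hc with ⟨hcU, -⟩ | hcb
    · have := hUU u v huv x hxU c hcU
      linarith
    · have h1 := hUU u v huv x hxU (y v) (hyU v)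
      have h2 : dist x (y v) ≤ dist x c + dist c (y v) := dist_triangle _ _ _
      linarith
    · have h1 := hUU u v huv (y u) (hyU u) c hcU
      have h2 : dist (y u) c ≤ dist (y u) x + dist x c := dist_triangle _ _ _
      have h3 : dist (y u) x = dist x (y u) := dist_comm _ _
      linarith
    · have h1 := hyy u v huv
      have h2 : dist (y u) (y v) ≤ dist (y u) x + dist x c + dist c (y v) :=
        dist_triangle4 _ _ _ _
      have h3 : dist (y u) x = dist x (y u) := dist_comm _ _
      linarith
  have hPUb : ∀ u v w, u ≠ v → w ≠ u → w ≠ v → ∀ p, p ∈ P u v → ∀ x, x ∈ Ub w →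
      K < dist p x := by
    intro u v w huv hwu hwv p hp x hx
    have hadj := (SimpleGraph.top_adj u v).mpr huv
    rcases hUbpt w x hx with ⟨hxU, -⟩ | hxb
    · have := hPU u v w hadj hwu hwv p hp x hxU
      linarith
    · have h1 := hPU u v w hadj hwu hwv p hp (y w) (hyU w)
      have h2 : dist p (y w) ≤ dist p x + dist x (y w) := dist_triangle _ _ _
      linarith
  have hQUb : ∀ v w, v ≠ w → ∀ x, x ∈ Qset v → ∀ c, c ∈ Ub w → K < dist x c := by
    intro v w hvw x hx c hc
    rcases hUbpt w c hc with ⟨hcU, -⟩ | hcb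
    · exact hQfarY v x hx c (hUY w hcU)
    · obtain ⟨t, ht1, ht2, hteq⟩ := hQpt v x hx
      subst hteq
      have h1 := hyy v w hvw
      have h2 : dist (y v) (y w) ≤ dist (y v) (σ v t) + dist (σ v t) c + dist c (y w) :=
        dist_triangle4 _ _ _ _
      have h3 : dist (y v) (σ v t) = dist (σ v t) (y v) := dist_comm _ _
      have h4 := hdyv v t (by linarith)
      linarith
  have hQQ : ∀ v w, v ≠ w → ∀ x, x ∈ Qset v → ∀ c, c ∈ Qset w → K < dist x c := by
    intro v w hvw x hx c hc
    obtain ⟨t, ht1, ht2, hteq⟩ := hQpt v x hx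
    subst hteq
    obtain ⟨s, hs1, hs2, hseq⟩ := hQpt w c hc
    subst hseq
    have h1 := hyy v w hvw
    have h2 : dist (y v) (y w) ≤ dist (y v) (σ v t) + dist (σ v t) (σ w s) + dist (σ w s) (y w) :=
      dist_triangle4 _ _ _ _
    have h3 : dist (y v) (σ v t) = dist (σ v t) (y v) := dist_comm _ _
    have h4 := hdyv v t (by linarith)
    have h5 := hdyv w s (by linarith)
    linarith
  have hPW : ∀ u v, u ≠ v → ∀ p, p ∈ P u v → ∀ w ∈ W, K < dist p w := by
    intro u v huv p hp w hw
    have h1 := hWfar w hw p (hPM u v huv hp)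
    rw [dist_comm] at h1
    linarith
  -- path-connectivity of the new branch sets
  have hAmem : ∀ v, y v ∈ Aset v := fun v => by
    rw [hAset]; exact ⟨0, ⟨le_refl 0, zero_le_one⟩, hAf0 v⟩
  have hAmem1 : ∀ v, σ v 0 ∈ Aset v := fun v => by
    rw [hAset]; exact ⟨1, ⟨zero_le_one, le_refl 1⟩, hAf1 v⟩
  have hRmem0 : ∀ v, σ v 0 ∈ Rset v := fun v => by
    rw [hRset]; exact ⟨0, ⟨le_refl 0, le_of_lt haa0⟩, rfl⟩
  have hRmemaa : ∀ v, σ v aa ∈ Rset v := fun v => by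
    rw [hRset]; exact ⟨aa, ⟨le_of_lt haa0, le_refl aa⟩, rfl⟩
  have hApc : ∀ v, IsPathConnected (Aset v) := by
    intro v
    rw [hAset]
    exact ((convex_Icc (0:ℝ) 1).isPathConnected ⟨0, le_refl 0, zero_le_one⟩).image' (hAfc v)
  have hRpc : ∀ v, IsPathConnected (Rset v) := by
    intro v
    rw [hRset]
    refine ((convex_Icc (0:ℝ) aa).isPathConnected ⟨0, le_refl 0, le_of_lt haa0⟩).image' ?_
    exact (hσcont v).mono (fun t ht => ht.1)
  have hUhpc : ∀ v, IsPathConnected (Uh v) := by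
    intro v
    rw [hUh]
    haveI : Nonempty (Fin m) := ⟨v⟩
    refine aux_pc_iUnion (x := y v) (fun w => ?_) (fun w => Or.inl (hS1y v w))
    exact (hS1pc v w).union (hS2pc v w) ⟨y v, hS1y v w, hS2y v w⟩
  have hUbpc : ∀ v, IsPathConnected (Ub v) := by
    intro v
    rw [hUbd]
    refine (hUhpc v).union ((hApc v).union (hRpc v) ⟨σ v 0, hAmem1 v, hRmem0 v⟩) ?_
    exact ⟨y v, hUhy v, Or.inl (hAmem v)⟩
  -- memberships needed for the edge maps
  have hσaaUb : ∀ v, σ v aa ∈ Ub v := fun v => by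
    rw [hUbd]; exact Or.inr (Or.inr (hRmemaa v))
  have hF0Ub : ∀ u v, u ≠ v → F u v 0 ∈ Ub u := by
    intro u v h
    rw [hUbd]
    refine Or.inl ?_
    rw [hUh]
    refine mem_iUnion.2 ⟨v, Or.inl ?_⟩
    rw [← hq1e u v h]
    exact hS1q u v
  have hF1Ub : ∀ u v, u ≠ v → F u v 1 ∈ Ub v := by
    intro u v h
    rw [hUbd]
    refine Or.inl ?_
    rw [hUh]
    refine mem_iUnion.2 ⟨u, Or.inr ?_⟩
    rw [← hq2e v u h]
    exact hS2q v u
  -- parametrizations of the new edge paths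
  have hQmap : ∀ v, ∃ f : ℝ → X, ContinuousOn f (Icc 0 1) ∧ f '' Icc 0 1 = Qset v ∧
      f 0 = σ v aa ∧ f 1 = σ v bb := by
    intro v
    refine ⟨(σ v) ∘ (fun t => aa + t * (bb - aa)), ?_, ?_, ?_, ?_⟩
    · refine (hσcont v).comp ((continuous_const.add (continuous_id.mul continuous_const)).continuousOn) ?_
      intro t ht
      simp only [mem_Ici]
      nlinarith [ht.1, ht.2, haa0, haabb]
    · rw [image_comp, aux_affine_image aa bb haabb, hQsetd]
    · show σ v (aa + 0 * (bb - aa)) = σ v aa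
      norm_num
    · show σ v (aa + 1 * (bb - aa)) = σ v bb
      norm_num
  have hQmap' : ∀ v, ∃ f : ℝ → X, ContinuousOn f (Icc 0 1) ∧ f '' Icc 0 1 = Qset v ∧
      f 0 = σ v bb ∧ f 1 = σ v aa := by
    intro v
    refine ⟨(σ v) ∘ (fun t => bb + t * (aa - bb)), ?_, ?_, ?_, ?_⟩
    · refine (hσcont v).comp ((continuous_const.add (continuous_id.mul continuous_const)).continuousOn) ?_
      intro t ht
      simp only [mem_Ici]
      nlinarith [ht.1, ht.2, haa0, haabb]
    · rw [image_comp, aux_affine_image' aa bb haabb, hQsetd]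
    · show σ v (bb + 0 * (aa - bb)) = σ v bb
      norm_num
    · show σ v (bb + 1 * (aa - bb)) = σ v aa
      norm_num
  -- assembly of the new fat minor
  refine ⟨fun i => Fin.lastCases W Ub i,
    fun i j => Fin.lastCases (Fin.lastCases (∅ : Set X) Qset j)
      (fun u => Fin.lastCases (Qset u) (fun v' => P u v') j) i, ?_, ?_, ?_, ?_, ?_, ?_⟩
  · -- path-connectivity
    intro i
    rcases Fin.eq_castSucc_or_eq_last i with ⟨u, rfl⟩ | rfl
    · simp only [Fin.lastCases_castSucc]
      exact hUbpc u
    · simp only [Fin.lastCases_last]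
      exact hWpc
  · -- symmetry
    intro i j
    rcases Fin.eq_castSucc_or_eq_last i with ⟨u, rfl⟩ | rfl <;>
      rcases Fin.eq_castSucc_or_eq_last j with ⟨v, rfl⟩ | rfl <;>
      simp only [Fin.lastCases_castSucc, Fin.lastCases_last]
    exact hPsymm u v
  · -- edge paths
    intro i j hadj
    rw [SimpleGraph.top_adj] at hadj
    rcases Fin.eq_castSucc_or_eq_last i with ⟨u, rfl⟩ | rfl
    · rcases Fin.eq_castSucc_or_eq_last j with ⟨v, rfl⟩ | rfl
      · have huv : u ≠ v := fun h => hadj (by rw [h])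
        obtain ⟨hfc, hfim, hf0, hf1⟩ := hFspec u v huv
        refine ⟨F u v, hfc, ?_, ?_, ?_⟩
        · rw [hfim]
          simp only [Fin.lastCases_castSucc]
        · simp only [Fin.lastCases_castSucc]
          exact hF0Ub u v huv
        · simp only [Fin.lastCases_castSucc]
          exact hF1Ub u v huv
      · obtain ⟨f, hfc, hfim, hf0, hf1⟩ := hQmap u
        refine ⟨f, hfc, ?_, ?_, ?_⟩
        · rw [hfim]
          simp only [Fin.lastCases_castSucc, Fin.lastCases_last]
        · rw [hf0]
          simp only [Fin.lastCases_castSucc]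
          exact hσaaUb u
        · rw [hf1]
          simp only [Fin.lastCases_last]
          exact hσbW u
    · rcases Fin.eq_castSucc_or_eq_last j with ⟨v, rfl⟩ | rfl
      · obtain ⟨f, hfc, hfim, hf0, hf1⟩ := hQmap' v
        refine ⟨f, hfc, ?_, ?_, ?_⟩
        · rw [hfim]
          simp only [Fin.lastCases_castSucc, Fin.lastCases_last]
        · rw [hf0]
          simp only [Fin.lastCases_last]
          exact hσbW v
        · rw [hf1]
          simp only [Fin.lastCases_castSucc]
          exact hσaaUb v
      · exact absurd rfl hadj
  · -- separation of branch sets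
    intro i j hij a ha c hc
    rcases Fin.eq_castSucc_or_eq_last i with ⟨u, rfl⟩ | rfl <;>
      rcases Fin.eq_castSucc_or_eq_last j with ⟨v, rfl⟩ | rfl <;>
      simp only [Fin.lastCases_castSucc, Fin.lastCases_last] at ha hc
    · have huv : u ≠ v := fun h => hij (by rw [h])
      exact hUbUb u v huv a ha c hc
    · exact hUbW u a ha c hc
    · rw [dist_comm]
      exact hUbW v c hc a ha
    · exact absurd rfl hij
  · -- separation of edge paths from branch sets
    intro i j w' hadj hwi hwj p hp x hx
    rw [SimpleGraph.top_adj] at hadj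
    rcases Fin.eq_castSucc_or_eq_last i with ⟨u, rfl⟩ | rfl
    · rcases Fin.eq_castSucc_or_eq_last j with ⟨v, rfl⟩ | rfl
      · have huv : u ≠ v := fun h => hadj (by rw [h])
        simp only [Fin.lastCases_castSucc] at hp
        rcases Fin.eq_castSucc_or_eq_last w' with ⟨w, rfl⟩ | rfl
        · simp only [Fin.lastCases_castSucc] at hx
          have hwu : w ≠ u := fun h => hwi (by rw [h])
          have hwv : w ≠ v := fun h => hwj (by rw [h])
          exact hPUb u v w huv hwu hwv p hp x hx
        · simp only [Fin.lastCases_last] at hx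
          exact hPW u v huv p hp x hx
      · simp only [Fin.lastCases_castSucc, Fin.lastCases_last] at hp
        rcases Fin.eq_castSucc_or_eq_last w' with ⟨w, rfl⟩ | rfl
        · simp only [Fin.lastCases_castSucc] at hx
          have huw : u ≠ w := fun h => hwi (by rw [h])
          exact hQUb u w (fun h => huw h) p hp x hx
        · exact absurd rfl hwj
    · rcases Fin.eq_castSucc_or_eq_last j with ⟨v, rfl⟩ | rfl
      · simp only [Fin.lastCases_castSucc, Fin.lastCases_last] at hp
        rcases Fin.eq_castSucc_or_eq_last w' with ⟨w, rfl⟩ | rfl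
        · simp only [Fin.lastCases_castSucc] at hx
          have hvw : v ≠ w := fun h => hwj (by rw [h])
          exact hQUb v w hvw p hp x hx
        · exact absurd rfl hwi
      · exact absurd rfl hadj
  · -- separation of distinct edge paths
    intro i j i' j' hadj hadj' hne p hp c hc
    rw [SimpleGraph.top_adj] at hadj hadj'
    rcases Fin.eq_castSucc_or_eq_last i with ⟨u, rfl⟩ | rfl <;>
      rcases Fin.eq_castSucc_or_eq_last j with ⟨v, rfl⟩ | rfl
    · -- (u, v) old edge
      have huv : u ≠ v := fun h => hadj (by rw [h])
      simp only [Fin.lastCases_castSucc] at hp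
      rcases Fin.eq_castSucc_or_eq_last i' with ⟨u', rfl⟩ | rfl <;>
        rcases Fin.eq_castSucc_or_eq_last j' with ⟨v', rfl⟩ | rfl
      · have huv' : u' ≠ v' := fun h => hadj' (by rw [h])
        simp only [Fin.lastCases_castSucc] at hc
        have hne' : s(u, v) ≠ s(u', v') := by
          intro h
          exact hne (by rw [← Sym2.map_pair_eq Fin.castSucc u v,
            ← Sym2.map_pair_eq Fin.castSucc u' v', h])
        have := hPP u v u' v' ((SimpleGraph.top_adj u v).mpr huv)
          ((SimpleGraph.top_adj u' v').mpr huv') hne' p hp c hc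
        linarith
      · simp only [Fin.lastCases_castSucc, Fin.lastCases_last] at hc
        rw [dist_comm]
        exact hQfarY u' c hc p (hPY u v huv hp)
      · simp only [Fin.lastCases_castSucc, Fin.lastCases_last] at hc
        rw [dist_comm]
        exact hQfarY v' c hc p (hPY u v huv hp)
      · exact absurd rfl hadj'
    · -- (u, last) new edge
      simp only [Fin.lastCases_castSucc, Fin.lastCases_last] at hp
      rcases Fin.eq_castSucc_or_eq_last i' with ⟨u', rfl⟩ | rfl <;>
        rcases Fin.eq_castSucc_or_eq_last j' with ⟨v', rfl⟩ | rfl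
      · have huv' : u' ≠ v' := fun h => hadj' (by rw [h])
        simp only [Fin.lastCases_castSucc] at hc
        exact hQfarY u p hp c (hPY u' v' huv' hc)
      · simp only [Fin.lastCases_castSucc, Fin.lastCases_last] at hc
        have huu' : u ≠ u' := by
          intro h
          exact hne (by rw [h])
        exact hQQ u u' huu' p hp c hc
      · simp only [Fin.lastCases_castSucc, Fin.lastCases_last] at hc
        have huu' : u ≠ v' := by
          intro h
          refine hne ?_
          rw [h]
          exact Sym2.eq_swap
        exact hQQ u v' huu' p hp c hc
      · exact absurd rfl hadj'
    · -- (last, v) new edge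
      simp only [Fin.lastCases_castSucc, Fin.lastCases_last] at hp
      rcases Fin.eq_castSucc_or_eq_last i' with ⟨u', rfl⟩ | rfl <;>
        rcases Fin.eq_castSucc_or_eq_last j' with ⟨v', rfl⟩ | rfl
      · have huv' : u' ≠ v' := fun h => hadj' (by rw [h])
        simp only [Fin.lastCases_castSucc] at hc
        exact hQfarY v p hp c (hPY u' v' huv' hc)
      · simp only [Fin.lastCases_castSucc, Fin.lastCases_last] at hc
        have hvv' : v ≠ u' := by
          intro h
          refine hne ?_
          rw [h]
          exact Sym2.eq_swap
        exact hQQ v u' hvv' p hp c hc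
      · simp only [Fin.lastCases_castSucc, Fin.lastCases_last] at hc
        have hvv' : v ≠ v' := by
          intro h
          exact hne (by rw [h])
        exact hQQ v v' hvv' p hp c hc
      · exact absurd rfl hadj'
    · exact absurd rfl hadj
end

section
/- Constant-height paths in finitely presented groups: let G be a finitely presented group with Cayley graph X corresponding to a finite presentation, and let ε₀ be the length of the longest defining relator. Let γ ⊂ X be a bi-infinite geodesic and r ≥ 0. If a, b ∈ X satisfy dist(a, γ) = dist(b, γ) = r and there exists a path from a to b disjoint from the open (r−1)-neighbourhood N_{r−1}(γ), then there exists a path p from a to b contained in the annulus A_{r±ε₀}(γ) = {x : r − ε₀ ≤ dist(x, γ) ≤ r + ε₀}. -/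
open Set

/-- The Cayley graph of a group with respect to a generating set `S`. -/
def cayley (G : Type*) [Group G] (S : Set G) : SimpleGraph G :=
  SimpleGraph.fromRel (fun x y => x⁻¹ * y ∈ S)

/-- The group defined by the presentation `⟨Fin n ∣ Rel⟩`. -/
abbrev presGroup (n : ℕ) (Rel : Set (FreeGroup (Fin n))) : Type :=
  FreeGroup (Fin n) ⧸ Subgroup.normalClosure Rel

/-- The images of the standard generators in the presented group. -/
def presGens (n : ℕ) (Rel : Set (FreeGroup (Fin n))) : Set (presGroup n Rel) :=
  Set.range fun i : Fin n => (QuotientGroup.mk (FreeGroup.of i) : presGroup n Rel)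

/-- The Cayley graph of the presented group with respect to its standard generators. -/
def presCayley (n : ℕ) (Rel : Set (FreeGroup (Fin n))) : SimpleGraph (presGroup n Rel) :=
  cayley _ (presGens n Rel)

/-- Natural-number distance from a vertex to a set of vertices in a graph. -/
noncomputable def ndistSet {V : Type*} (G : SimpleGraph V) (x : V) (A : Set V) : ℕ :=
  sInf {d : ℕ | ∃ a ∈ A, G.dist x a = d}

namespace CHP

open SimpleGraph FreeGroup

attribute [local instance] Classical.propDecidable


variable {n : ℕ} {Rel : Set (FreeGroup (Fin n))}

/-- image of a single letter in the presented group -/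
def lV (Rel : Set (FreeGroup (Fin n))) (t : Fin n × Bool) : presGroup n Rel :=
  QuotientGroup.mk (FreeGroup.mk [t])

lemma lV_inv (t : Fin n × Bool) : lV Rel (t.1, !t.2) = (lV Rel t)⁻¹ := by
  have h : FreeGroup.invRev [t] = [(t.1, !t.2)] := by simp [FreeGroup.invRev]
  unfold lV
  rw [← h, ← FreeGroup.inv_mk, QuotientGroup.mk_inv]

lemma lV_true (i : Fin n) :
    lV Rel (i, true) = (QuotientGroup.mk (FreeGroup.of i) : presGroup n Rel) := rfl

lemma lV_false (i : Fin n) :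
    lV Rel (i, false) = ((QuotientGroup.mk (FreeGroup.of i) : presGroup n Rel))⁻¹ := by
  have h := lV_inv (Rel := Rel) (i, true)
  rw [← lV_true (Rel := Rel) i, ← h]
  rfl

lemma presCayley_adj_iff {x y : presGroup n Rel} :
    (presCayley n Rel).Adj x y ↔ x ≠ y ∧ ∃ t, x * lV Rel t = y := by
  constructor
  · rintro h
    rw [presCayley, cayley, SimpleGraph.fromRel_adj] at h
    obtain ⟨hne, h | h⟩ := h
    · obtain ⟨i, hi⟩ := h
      have hi' : (QuotientGroup.mk (FreeGroup.of i) : presGroup n Rel) = x⁻¹ * y := hi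
      refine ⟨hne, (i, true), ?_⟩
      rw [lV_true, hi', mul_inv_cancel_left]
    · obtain ⟨i, hi⟩ := h
      have hi' : (QuotientGroup.mk (FreeGroup.of i) : presGroup n Rel) = y⁻¹ * x := hi
      refine ⟨hne, (i, false), ?_⟩
      rw [lV_false, hi']
      group
  · rintro ⟨hne, ⟨i, b⟩, ht⟩
    rw [presCayley, cayley, SimpleGraph.fromRel_adj]
    refine ⟨hne, ?_⟩
    cases b
    · right
      exact ⟨i, by rw [← ht, lV_false]; group⟩
    · left
      exact ⟨i, by rw [← ht, lV_true]; group⟩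

/-- left translation is a graph hom -/
lemma adj_mul_left {x y : presGroup n Rel} (g : presGroup n Rel)
    (h : (presCayley n Rel).Adj x y) : (presCayley n Rel).Adj (g * x) (g * y) := by
  rw [presCayley_adj_iff] at h ⊢
  obtain ⟨hne, t, ht⟩ := h
  exact ⟨by simpa using hne, t, by rw [mul_assoc, ht]⟩

lemma reachable_mul_left {x y : presGroup n Rel} (g : presGroup n Rel)
    (h : (presCayley n Rel).Reachable x y) :
    (presCayley n Rel).Reachable (g * x) (g * y) := by
  obtain ⟨w⟩ := h
  exact ⟨w.map ⟨fun z => g * z, fun hab => adj_mul_left g hab⟩⟩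

lemma reachable_one (w : FreeGroup (Fin n)) :
    (presCayley n Rel).Reachable 1 (QuotientGroup.mk w) := by
  induction w using FreeGroup.induction_on with
  | C1 => exact SimpleGraph.Reachable.refl _
  | of i =>
      show (presCayley n Rel).Reachable 1 (QuotientGroup.mk (FreeGroup.of i))
      by_cases h : (QuotientGroup.mk (FreeGroup.of i) : presGroup n Rel) = 1
      · rw [h]
      · have hadj : (presCayley n Rel).Adj 1 (QuotientGroup.mk (FreeGroup.of i)) := by
          rw [presCayley_adj_iff]
          exact ⟨fun hh => h hh.symm, (i, true), by rw [lV_true, one_mul]⟩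
        exact hadj.reachable
  | inv_of i ih =>
      have ih' : (presCayley n Rel).Reachable 1 (QuotientGroup.mk (FreeGroup.of i)) := ih
      have h1 := reachable_mul_left (Rel := Rel)
        ((QuotientGroup.mk (FreeGroup.of i) : presGroup n Rel))⁻¹ ih'
      rw [mul_one, inv_mul_cancel] at h1
      show (presCayley n Rel).Reachable 1 (QuotientGroup.mk ((FreeGroup.of i)⁻¹))
      rw [QuotientGroup.mk_inv]
      exact h1.symm
  | mul u v ihu ihv =>
      have h2 := reachable_mul_left (Rel := Rel) (QuotientGroup.mk u) ihv
      rw [mul_one] at h2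
      show (presCayley n Rel).Reachable 1 (QuotientGroup.mk (u * v))
      rw [QuotientGroup.mk_mul]
      exact ihu.trans h2

lemma presCayley_connected : (presCayley n Rel).Connected := by
  constructor
  · intro x y
    obtain ⟨wx, rfl⟩ := QuotientGroup.mk_surjective x
    obtain ⟨wy, rfl⟩ := QuotientGroup.mk_surjective y
    exact (reachable_one wx).symm.trans (reachable_one wy)

end CHP

open SimpleGraph FreeGroup Set

namespace CHP


attribute [local instance] Classical.propDecidable

variable {n : ℕ} {Rel : Set (FreeGroup (Fin n))}

open scoped symmDiff

/-- the mod 2 edge chain traced by a word starting at `g` -/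
noncomputable def wordChain (Rel : Set (FreeGroup (Fin n))) :
    presGroup n Rel → List (Fin n × Bool) → Finset (Sym2 (presGroup n Rel))
  | _, [] => ∅
  | g, t :: l =>
      (if g = g * lV Rel t then ∅ else {s(g, g * lV Rel t)}) ∆ wordChain Rel (g * lV Rel t) l

/-- the vertices visited by a word starting at `g` -/
noncomputable def visited (Rel : Set (FreeGroup (Fin n))) :
    presGroup n Rel → List (Fin n × Bool) → List (presGroup n Rel)
  | g, [] => [g]
  | g, t :: l => g :: visited Rel (g * lV Rel t) l

/-- the product of the images of the letters of a word -/
noncomputable def prodV (Rel : Set (FreeGroup (Fin n))) (l : List (Fin n × Bool)) :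
    presGroup n Rel :=
  (l.map (lV Rel)).prod

lemma prodV_nil : prodV Rel [] = 1 := rfl

lemma prodV_cons (t : Fin n × Bool) (l : List (Fin n × Bool)) :
    prodV Rel (t :: l) = lV Rel t * prodV Rel l := by
  simp [prodV]

lemma prodV_eq_mk (l : List (Fin n × Bool)) :
    prodV Rel l = (QuotientGroup.mk (FreeGroup.mk l) : presGroup n Rel) := by
  induction l with
  | nil =>
      rw [prodV_nil, ← FreeGroup.one_eq_mk]
      simp
  | cons t l ih =>
      rw [prodV_cons, ih]
      have : FreeGroup.mk (t :: l) = FreeGroup.mk [t] * FreeGroup.mk l := by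
        rw [FreeGroup.mul_mk]
        rfl
      rw [this, QuotientGroup.mk_mul]
      rfl

lemma wordChain_append (g : presGroup n Rel) (l₁ l₂ : List (Fin n × Bool)) :
    wordChain Rel g (l₁ ++ l₂) = wordChain Rel g l₁ ∆ wordChain Rel (g * prodV Rel l₁) l₂ := by
  induction l₁ generalizing g with
  | nil =>
      simp only [List.nil_append, prodV_nil, mul_one]
      show wordChain Rel g l₂ = wordChain Rel g [] ∆ wordChain Rel g l₂
      rw [show wordChain Rel g [] = (⊥ : Finset (Sym2 (presGroup n Rel))) from rfl,
        bot_symmDiff]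
  | cons t l ih =>
      show wordChain Rel g (t :: (l ++ l₂)) = _
      rw [wordChain, wordChain, ih, prodV_cons, ← mul_assoc, symmDiff_assoc]

lemma wordChain_step {l l' : List (Fin n × Bool)} (h : Red.Step l l') (g : presGroup n Rel) :
    wordChain Rel g l = wordChain Rel g l' := by
  cases h with
  | @not L₁ L₂ x b =>
      rw [wordChain_append, wordChain_append]
      congr 1
      set g' := g * prodV Rel L₁ with hg'
      show wordChain Rel g' ((x, b) :: (x, !b) :: L₂) = wordChain Rel g' L₂
      rw [wordChain, wordChain]
      have hinv : lV Rel (x, !b) = (lV Rel (x, b))⁻¹ := lV_inv (x, b)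
      have hback : g' * lV Rel (x, b) * lV Rel (x, !b) = g' := by
        rw [hinv, mul_assoc, mul_inv_cancel, mul_one]
      rw [hback]
      set u := g' * lV Rel (x, b) with hu
      have hif : (if u = g' then (∅ : Finset (Sym2 (presGroup n Rel))) else {s(u, g')})
          = (if g' = u then ∅ else {s(g', u)}) := by
        by_cases h : g' = u
        · simp [h]
        · rw [if_neg h, if_neg (fun hh => h hh.symm)]
          rw [Sym2.eq_swap]
      rw [hif, ← symmDiff_assoc, symmDiff_self, bot_symmDiff]

lemma wordChain_red {l l' : List (Fin n × Bool)} (h : Red l l') (g : presGroup n Rel) :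
    wordChain Rel g l = wordChain Rel g l' := by
  induction h with
  | refl => rfl
  | tail _ hstep ih => rw [ih, wordChain_step hstep]

/-- the chain of a free group element -/
noncomputable def chainOf (Rel : Set (FreeGroup (Fin n))) (g : presGroup n Rel)
    (w : FreeGroup (Fin n)) : Finset (Sym2 (presGroup n Rel)) :=
  wordChain Rel g w.toWord

lemma wordChain_eq_chainOf (g : presGroup n Rel) (l : List (Fin n × Bool)) :
    wordChain Rel g l = chainOf Rel g (FreeGroup.mk l) := by
  rw [chainOf, FreeGroup.toWord_mk]
  exact wordChain_red FreeGroup.reduce.red g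

lemma chainOf_one (g : presGroup n Rel) : chainOf Rel g 1 = ∅ := by
  rw [chainOf, FreeGroup.toWord_one]
  rfl

lemma chainOf_mul (g : presGroup n Rel) (u v : FreeGroup (Fin n)) :
    chainOf Rel g (u * v) = chainOf Rel g u ∆ chainOf Rel (g * QuotientGroup.mk u) v := by
  have h1 : u * v = FreeGroup.mk (u.toWord ++ v.toWord) := by
    rw [← FreeGroup.mul_mk, FreeGroup.mk_toWord, FreeGroup.mk_toWord]
  rw [h1, ← wordChain_eq_chainOf, wordChain_append]
  have h2 : prodV Rel u.toWord = QuotientGroup.mk u := by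
    rw [prodV_eq_mk, FreeGroup.mk_toWord]
  rw [h2, chainOf, chainOf]

lemma chainOf_inv (g : presGroup n Rel) (u : FreeGroup (Fin n)) :
    chainOf Rel g u⁻¹ = chainOf Rel (g * QuotientGroup.mk u⁻¹) u := by
  have h := chainOf_mul (Rel := Rel) g u⁻¹ u
  rw [inv_mul_cancel, chainOf_one] at h
  exact (symmDiff_eq_bot.mp h.symm)

lemma chainOf_conj (g : presGroup n Rel) (x w : FreeGroup (Fin n))
    (hw : (QuotientGroup.mk w : presGroup n Rel) = 1) :
    chainOf Rel g (x * w * x⁻¹) = chainOf Rel (g * QuotientGroup.mk x) w := by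
  rw [chainOf_mul, chainOf_mul, chainOf_inv]
  have hxw : (QuotientGroup.mk (x * w) : presGroup n Rel) = QuotientGroup.mk x := by
    rw [QuotientGroup.mk_mul, hw, mul_one]
  rw [hxw, QuotientGroup.mk_inv, mul_inv_cancel_right]
  rw [symmDiff_assoc, symmDiff_comm (chainOf Rel (g * QuotientGroup.mk x) w),
    ← symmDiff_assoc, symmDiff_self, bot_symmDiff]

end CHP

namespace CHP

open SimpleGraph FreeGroup Set
open scoped symmDiff


attribute [local instance] Classical.propDecidable

variable {n : ℕ} {Rel : Set (FreeGroup (Fin n))}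

/-- fold of the chains of a list of cells -/
noncomputable def foldChain (Rel : Set (FreeGroup (Fin n)))
    (L : List (presGroup n Rel × FreeGroup (Fin n))) : Finset (Sym2 (presGroup n Rel)) :=
  (L.map fun c => chainOf Rel c.1 c.2).foldr (· ∆ ·) ∅

lemma foldChain_nil : foldChain Rel [] = ∅ := rfl

lemma foldChain_cons (c : presGroup n Rel × FreeGroup (Fin n))
    (L : List (presGroup n Rel × FreeGroup (Fin n))) :
    foldChain Rel (c :: L) = chainOf Rel c.1 c.2 ∆ foldChain Rel L := rfl

lemma foldChain_append (L₁ L₂ : List (presGroup n Rel × FreeGroup (Fin n))) :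
    foldChain Rel (L₁ ++ L₂) = foldChain Rel L₁ ∆ foldChain Rel L₂ := by
  induction L₁ with
  | nil =>
      rw [List.nil_append, foldChain_nil]
      rw [show (∅ : Finset (Sym2 (presGroup n Rel))) = ⊥ from rfl, bot_symmDiff]
  | cons c L ih =>
      rw [List.cons_append, foldChain_cons, foldChain_cons, ih, symmDiff_assoc]

def IsChainSum (Rel : Set (FreeGroup (Fin n))) (E : Finset (Sym2 (presGroup n Rel))) : Prop :=
  ∃ L : List (presGroup n Rel × FreeGroup (Fin n)),
    (∀ c ∈ L, c.2 ∈ Rel) ∧ E = foldChain Rel L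

lemma IsChainSum.empty : IsChainSum Rel (∅ : Finset (Sym2 (presGroup n Rel))) :=
  ⟨[], by simp, rfl⟩

lemma IsChainSum.symmDiff {A B : Finset (Sym2 (presGroup n Rel))}
    (hA : IsChainSum Rel A) (hB : IsChainSum Rel B) : IsChainSum Rel (A ∆ B) := by
  obtain ⟨L₁, h₁, rfl⟩ := hA
  obtain ⟨L₂, h₂, rfl⟩ := hB
  exact ⟨L₁ ++ L₂, by
    intro c hc
    rcases List.mem_append.mp hc with h | h
    · exact h₁ c h
    · exact h₂ c h, (foldChain_append L₁ L₂).symm⟩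

lemma mk_eq_one_of_mem_rel {w : FreeGroup (Fin n)} (hw : w ∈ Rel) :
    (QuotientGroup.mk w : presGroup n Rel) = 1 := by
  rw [QuotientGroup.eq_one_iff]
  exact Subgroup.subset_normalClosure hw

lemma isChainSum_of_mem_normalClosure {w : FreeGroup (Fin n)}
    (hw : w ∈ Subgroup.normalClosure Rel) (g : presGroup n Rel) :
    IsChainSum Rel (chainOf Rel g w) := by
  have hw' : w ∈ Subgroup.closure (Group.conjugatesOfSet Rel) := hw
  refine Subgroup.closure_induction
    (p := fun w _ => ∀ g : presGroup n Rel, IsChainSum Rel (chainOf Rel g w))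
    ?_ ?_ ?_ ?_ hw' g
  · intro x hx g'
    obtain ⟨r, hr, hconj⟩ := Group.mem_conjugatesOfSet_iff.mp hx
    obtain ⟨c, hc⟩ := isConj_iff.mp hconj
    have h1 : (QuotientGroup.mk r : presGroup n Rel) = 1 := mk_eq_one_of_mem_rel hr
    have h2 := chainOf_conj (Rel := Rel) g' c r h1
    rw [← hc, h2]
    refine ⟨[(g' * QuotientGroup.mk c, r)], by simpa using hr, ?_⟩
    rw [foldChain_cons, foldChain_nil]
    rw [show (∅ : Finset (Sym2 (presGroup n Rel))) = ⊥ from rfl, symmDiff_bot]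
  · intro g
    rw [chainOf_one]
    exact IsChainSum.empty
  · intro x y hx hy ihx ihy g
    have hx1 : (QuotientGroup.mk x : presGroup n Rel) = 1 := by
      rw [QuotientGroup.eq_one_iff]; exact hx
    rw [chainOf_mul, hx1, mul_one]
    exact (ihx g).symmDiff (ihy g)
  · intro x hx ihx g
    have hx1 : (QuotientGroup.mk x⁻¹ : presGroup n Rel) = 1 := by
      rw [QuotientGroup.eq_one_iff]; exact inv_mem hx
    rw [chainOf_inv, hx1, mul_one]
    exact ihx g

/-! ### degree parity -/

lemma z2 : (1 : ZMod 2) + 1 = 0 := by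
  have h : ((2 : ℕ) : ZMod 2) = 0 := ZMod.natCast_self 2
  push_cast at h
  linear_combination h

noncomputable def degP {V : Type*} (E : Finset (Sym2 V)) (v : V) : ZMod 2 :=
  ((E.filter fun e => v ∈ e).card : ZMod 2)

lemma degP_empty {V : Type*} (v : V) : degP (∅ : Finset (Sym2 V)) v = 0 := by
  simp [degP]

lemma card_symmDiff_parity {α : Type*} [DecidableEq α] (A B : Finset α) :
    ((A ∆ B).card : ZMod 2) = (A.card : ZMod 2) + (B.card : ZMod 2) := by
  have h1 : A ∆ B = (A ∪ B) \ (A ∩ B) := by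
    ext x
    simp [Finset.mem_symmDiff, Finset.mem_sdiff, Finset.mem_union, Finset.mem_inter]
    tauto
  have h2 : (A ∩ B) ⊆ (A ∪ B) := (Finset.inter_subset_left).trans Finset.subset_union_left
  have h3 : (A ∆ B).card + (A ∩ B).card + (A ∩ B).card = A.card + B.card := by
    rw [h1, Finset.card_sdiff_of_subset h2]
    have h4 : (A ∩ B).card ≤ (A ∪ B).card := Finset.card_le_card h2
    have h5 := Finset.card_union_add_card_inter A B
    omega
  have := congrArg (fun m : ℕ => (m : ZMod 2)) h3
  push_cast at this
  have hdouble : ∀ z : ZMod 2, z + z = 0 := fun z => CharTwo.add_self_eq_zero z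
  calc ((A ∆ B).card : ZMod 2)
      = ((A ∆ B).card : ZMod 2) + (((A ∩ B).card : ZMod 2) + ((A ∩ B).card : ZMod 2)) := by
        rw [hdouble]; ring
    _ = (A.card : ZMod 2) + (B.card : ZMod 2) := by rw [← add_assoc, this]

lemma degP_symmDiff {V : Type*} [DecidableEq (Sym2 V)]
    (A B : Finset (Sym2 V)) (v : V) :
    degP (A ∆ B) v = degP A v + degP B v := by
  have h : (A ∆ B).filter (fun e => v ∈ e) = (A.filter fun e => v ∈ e) ∆ (B.filter fun e => v ∈ e) := by
    ext e
    simp only [Finset.mem_filter, Finset.mem_symmDiff]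
    tauto
  unfold degP
  rw [h, card_symmDiff_parity]

lemma degP_single {V : Type*} {x y : V} (hxy : x ≠ y) (v : V) :
    degP ({s(x, y)} : Finset (Sym2 V)) v
      = (if v = x then 1 else 0) + (if v = y then 1 else 0) := by
  unfold degP
  rw [Finset.filter_singleton]
  by_cases hvx : v = x
  · subst hvx
    rw [if_pos (by simp), if_pos rfl, if_neg (by exact hxy)]
    simp
  · by_cases hvy : v = y
    · subst hvy
      rw [if_pos (by simp), if_neg hvx, if_pos rfl]
      simp
    · rw [if_neg (by simp [Sym2.mem_iff, hvx, hvy]), if_neg hvx, if_neg hvy]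
      simp

lemma degP_wordChain (g : presGroup n Rel) (l : List (Fin n × Bool)) (v : presGroup n Rel) :
    degP (wordChain Rel g l) v
      = (if v = g then 1 else 0) + (if v = g * prodV Rel l then 1 else 0) := by
  induction l generalizing g with
  | nil =>
      rw [prodV_nil, mul_one]
      show degP (∅ : Finset (Sym2 (presGroup n Rel))) v = _
      rw [degP_empty]
      by_cases h : v = g
      · simp only [if_pos h]; linear_combination -z2
      · simp only [if_neg h]; ring
  | cons t l ih =>
      rw [wordChain, degP_symmDiff, ih, prodV_cons, ← mul_assoc]
      by_cases h : g = g * lV Rel t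
      · rw [if_pos h, degP_empty, ← h]
        ring
      · rw [if_neg h, degP_single h]
        split_ifs <;> rfl

lemma degP_chainOf (g : presGroup n Rel) (w : FreeGroup (Fin n)) (v : presGroup n Rel) :
    degP (chainOf Rel g w) v
      = (if v = g then 1 else 0) + (if v = g * QuotientGroup.mk w then 1 else 0) := by
  rw [chainOf, degP_wordChain]
  have h : prodV Rel w.toWord = QuotientGroup.mk w := by
    rw [prodV_eq_mk, FreeGroup.mk_toWord]
  rw [h]

lemma degP_chainOf_closed (g : presGroup n Rel) {w : FreeGroup (Fin n)}
    (hw : (QuotientGroup.mk w : presGroup n Rel) = 1) (v : presGroup n Rel) :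
    degP (chainOf Rel g w) v = 0 := by
  rw [degP_chainOf, hw, mul_one]
  by_cases h : v = g
  · simp only [if_pos h]; linear_combination z2
  · simp only [if_neg h]; ring

end CHP

namespace CHP

open SimpleGraph FreeGroup Set
open scoped symmDiff

attribute [local instance] Classical.propDecidable

variable {n : ℕ} {Rel : Set (FreeGroup (Fin n))}

lemma mem_edgeSet_of_mem_wordChain {g : presGroup n Rel} {l : List (Fin n × Bool)}
    {e : Sym2 (presGroup n Rel)} (he : e ∈ wordChain Rel g l) :
    e ∈ (presCayley n Rel).edgeSet := by
  induction l generalizing g with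
  | nil => simp [wordChain] at he
  | cons t l ih =>
      rw [wordChain] at he
      rcases Finset.mem_symmDiff.mp he with ⟨h1, -⟩ | ⟨h1, -⟩
      · by_cases h : g = g * lV Rel t
        · rw [if_pos h] at h1; simp at h1
        · rw [if_neg h] at h1
          rw [Finset.mem_singleton] at h1
          subst h1
          rw [SimpleGraph.mem_edgeSet, presCayley_adj_iff]
          exact ⟨h, t, rfl⟩
      · exact ih h1

lemma mem_visited_self (g : presGroup n Rel) (l : List (Fin n × Bool)) :
    g ∈ visited Rel g l := by
  cases l with
  | nil => simp [visited]
  | cons t l => simp [visited]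

lemma mem_visited_of_mem_wordChain {g : presGroup n Rel} {l : List (Fin n × Bool)}
    {e : Sym2 (presGroup n Rel)} (he : e ∈ wordChain Rel g l) :
    ∀ v ∈ e, v ∈ visited Rel g l := by
  induction l generalizing g with
  | nil => simp [wordChain] at he
  | cons t l ih =>
      intro v hv
      rw [wordChain] at he
      rw [show visited Rel g (t :: l) = g :: visited Rel (g * lV Rel t) l from rfl]
      rcases Finset.mem_symmDiff.mp he with ⟨h1, -⟩ | ⟨h1, -⟩
      · by_cases h : g = g * lV Rel t
        · rw [if_pos h] at h1; simp at h1
        · rw [if_neg h] at h1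
          rw [Finset.mem_singleton] at h1
          subst h1
          rcases Sym2.mem_iff.mp hv with rfl | rfl
          · exact List.mem_cons_self
          · exact List.mem_cons_of_mem _ (mem_visited_self _ l)
      · exact List.mem_cons_of_mem _ (ih h1 v hv)

lemma dist_lV_le (g : presGroup n Rel) (t : Fin n × Bool) :
    (presCayley n Rel).dist g (g * lV Rel t) ≤ 1 := by
  by_cases h : g = g * lV Rel t
  · rw [← h, SimpleGraph.dist_self]; omega
  · have hadj : (presCayley n Rel).Adj g (g * lV Rel t) := by
      rw [presCayley_adj_iff]; exact ⟨h, t, rfl⟩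
    exact SimpleGraph.dist_le (SimpleGraph.Walk.cons hadj SimpleGraph.Walk.nil)

lemma dist_visited_head {g : presGroup n Rel} {l : List (Fin n × Bool)}
    {v : presGroup n Rel} (hv : v ∈ visited Rel g l) :
    (presCayley n Rel).dist g v ≤ l.length := by
  induction l generalizing g with
  | nil =>
      simp [visited] at hv
      subst hv
      simp [SimpleGraph.dist_self]
  | cons t l ih =>
      rw [show visited Rel g (t :: l) = g :: visited Rel (g * lV Rel t) l from rfl] at hv
      rcases List.mem_cons.mp hv with rfl | hv
      · simp [SimpleGraph.dist_self]
      · calc (presCayley n Rel).dist g v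
            ≤ (presCayley n Rel).dist g (g * lV Rel t)
              + (presCayley n Rel).dist (g * lV Rel t) v :=
              presCayley_connected.dist_triangle
          _ ≤ 1 + l.length := Nat.add_le_add (dist_lV_le g t) (ih hv)
          _ = (t :: l).length := by simp [List.length_cons]; omega

lemma dist_visited_pair {g : presGroup n Rel} {l : List (Fin n × Bool)}
    {u v : presGroup n Rel} (hu : u ∈ visited Rel g l) (hv : v ∈ visited Rel g l) :
    (presCayley n Rel).dist u v ≤ l.length := by
  induction l generalizing g with
  | nil =>
      simp [visited] at hu hv
      subst hu; subst hv
      simp [SimpleGraph.dist_self]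
  | cons t l ih =>
      rw [show visited Rel g (t :: l) = g :: visited Rel (g * lV Rel t) l from rfl] at hu hv
      rcases List.mem_cons.mp hu with rfl | hu
      · rcases List.mem_cons.mp hv with rfl | hv
        · simp [SimpleGraph.dist_self]
        · calc (presCayley n Rel).dist u v
              ≤ (presCayley n Rel).dist u (u * lV Rel t)
                + (presCayley n Rel).dist (u * lV Rel t) v :=
                presCayley_connected.dist_triangle
            _ ≤ 1 + l.length := Nat.add_le_add (dist_lV_le u t) (dist_visited_head hv)
            _ = (t :: l).length := by simp [List.length_cons]; omega
      · rcases List.mem_cons.mp hv with rfl | hv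
        · calc (presCayley n Rel).dist u v
              = (presCayley n Rel).dist v u := SimpleGraph.dist_comm
            _ ≤ (presCayley n Rel).dist v (v * lV Rel t)
                + (presCayley n Rel).dist (v * lV Rel t) u :=
                presCayley_connected.dist_triangle
            _ ≤ 1 + l.length := Nat.add_le_add (dist_lV_le v t) (dist_visited_head hu)
            _ = (t :: l).length := by simp [List.length_cons]; omega
        · exact le_trans (ih hu hv) (by simp [List.length_cons])

/-! ### extracting a walk from an edge set with odd degrees only at the two ends -/

lemma walk_of_odd_degrees {V : Type*} (G : SimpleGraph V) :
    ∀ (N : ℕ) (E : Finset (Sym2 V)), E.card ≤ N →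
    (∀ e ∈ E, e ∈ G.edgeSet) →
    ∀ a b : V, a ≠ b →
    Odd (E.filter fun e => a ∈ e).card →
    Odd (E.filter fun e => b ∈ e).card →
    (∀ v : V, v ≠ a → v ≠ b → Even (E.filter fun e => v ∈ e).card) →
    ∃ w : G.Walk a b, ∀ e ∈ w.edges, e ∈ E := by
  intro N
  induction N with
  | zero =>
      intro E hcard _ a b _ ha _ _
      have : E = ∅ := Finset.card_eq_zero.mp (Nat.le_zero.mp hcard)
      subst this
      simp [Nat.odd_iff] at ha
  | succ N ih =>
      intro E hcard hE a b hab ha hb hother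
      have hpos : 0 < (E.filter fun e => a ∈ e).card := by
        rcases ha with ⟨k, hk⟩; omega
      obtain ⟨e, he⟩ := Finset.card_pos.mp hpos
      rw [Finset.mem_filter] at he
      obtain ⟨heE, hae⟩ := he
      induction e using Sym2.ind with
      | _ y z =>
      have hyz : y ≠ z := by
        intro h
        exact (G.not_isDiag_of_mem_edgeSet (hE _ heE)) (by rw [h]; exact Sym2.mk_isDiag_iff.mpr rfl)
      -- wlog a = y
      obtain ⟨x, hx, hax⟩ : ∃ x, s(y, z) = s(a, x) ∧ a ≠ x := by
        rcases Sym2.mem_iff.mp hae with rfl | rfl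
        · exact ⟨z, rfl, hyz⟩
        · exact ⟨y, Sym2.eq_swap, fun h => hyz h.symm⟩
      rw [hx] at heE hae
      have hadj : G.Adj a x := (G.mem_edgeSet).mp (hE _ heE)
      by_cases hxb : x = b
      · subst hxb
        exact ⟨SimpleGraph.Walk.cons hadj SimpleGraph.Walk.nil, by
          intro e he
          simp only [SimpleGraph.Walk.edges_cons, SimpleGraph.Walk.edges_nil,
            List.mem_singleton, List.mem_cons] at he
          rcases he with rfl | he
          · exact heE
          · simp at he⟩
      · -- recurse on E minus this edge
        set E' := E.erase s(a, x) with hE'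
        have hcard' : E'.card ≤ N := by
          rw [hE', Finset.card_erase_of_mem heE]
          omega
        have hfilter : ∀ v : V, (E'.filter fun e => v ∈ e) =
            if v ∈ s(a, x) then (E.filter fun e => v ∈ e).erase s(a, x)
            else (E.filter fun e => v ∈ e) := by
          intro v
          by_cases hv : v ∈ s(a, x)
          · rw [if_pos hv]
            ext e'
            simp only [hE', Finset.mem_filter, Finset.mem_erase]
            tauto
          · rw [if_neg hv]
            ext e'
            simp only [hE', Finset.mem_filter, Finset.mem_erase]
            constructor
            · rintro ⟨⟨-, h2⟩, h3⟩; exact ⟨h2, h3⟩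
            · rintro ⟨h2, h3⟩
              refine ⟨⟨?_, h2⟩, h3⟩
              rintro rfl
              exact hv h3
        have hmem_filter : s(a, x) ∈ E.filter fun e => a ∈ e := by
          rw [Finset.mem_filter]; exact ⟨heE, hae⟩
        have hmem_filter_x : s(a, x) ∈ E.filter fun e => x ∈ e := by
          rw [Finset.mem_filter]
          exact ⟨heE, by simp⟩
        have ha' : Even (E'.filter fun e => a ∈ e).card := by
          rw [hfilter a, if_pos (by simp), Finset.card_erase_of_mem hmem_filter]
          have hpos2 : 0 < (E.filter fun e => a ∈ e).card := by
            rcases ha with ⟨k, hk⟩; omega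
          rw [Nat.even_sub (by omega)]
          simp only [Nat.even_iff, Nat.odd_iff] at ha ⊢
          omega
        have hx' : Odd (E'.filter fun e => x ∈ e).card := by
          rw [hfilter x, if_pos (by simp), Finset.card_erase_of_mem hmem_filter_x]
          have heven : Even (E.filter fun e => x ∈ e).card := hother x hax.symm hxb
          have : 0 < (E.filter fun e => x ∈ e).card := Finset.card_pos.mpr ⟨_, hmem_filter_x⟩
          rcases heven with ⟨k, hk⟩
          rw [Nat.odd_iff]
          omega
        have hb' : Odd (E'.filter fun e => b ∈ e).card := by
          rw [hfilter b, if_neg ?_]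
          · exact hb
          · simp only [Sym2.mem_iff]
            push_neg
            exact ⟨fun h => hab h.symm, fun h => hxb h.symm⟩
        have hother' : ∀ v : V, v ≠ x → v ≠ b → Even (E'.filter fun e => v ∈ e).card := by
          intro v hvx hvb
          by_cases hva : v = a
          · subst hva; exact ha'
          · rw [hfilter v, if_neg ?_]
            · exact hother v hva hvb
            · simp only [Sym2.mem_iff]
              push_neg
              exact ⟨hva, hvx⟩
        obtain ⟨w', hw'⟩ := ih E' hcard'
          (fun e he => hE e (Finset.mem_of_mem_erase he)) x b (fun h => hxb h) hx' hb' hother'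
        refine ⟨SimpleGraph.Walk.cons hadj w', ?_⟩
        intro e he
        rw [SimpleGraph.Walk.edges_cons, List.mem_cons] at he
        rcases he with rfl | he
        · exact heE
        · exact Finset.mem_of_mem_erase (hw' e he)

lemma odd_card_of_degP_one {V : Type*} {E : Finset (Sym2 V)} {v : V} (h : degP E v = 1) :
    Odd (E.filter fun e => v ∈ e).card := by
  unfold degP at h
  rw [Nat.odd_iff]
  set c := (E.filter fun e => v ∈ e).card with hc
  have h2 : ((c % 2 : ℕ) : ZMod 2) = 1 := by rw [ZMod.natCast_mod]; exact h
  have h3 : c % 2 = 0 ∨ c % 2 = 1 := by omega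
  rcases h3 with h3 | h3
  · rw [h3] at h2; simp at h2
  · exact h3

lemma even_card_of_degP_zero {V : Type*} {E : Finset (Sym2 V)} {v : V} (h : degP E v = 0) :
    Even (E.filter fun e => v ∈ e).card := by
  unfold degP at h
  rw [Nat.even_iff]
  set c := (E.filter fun e => v ∈ e).card with hc
  have h2 : ((c % 2 : ℕ) : ZMod 2) = 0 := by rw [ZMod.natCast_mod]; exact h
  have h3 : c % 2 = 0 ∨ c % 2 = 1 := by omega
  rcases h3 with h3 | h3
  · exact h3
  · rw [h3] at h2; simp at h2


lemma walk_of_degP {V : Type*} (G : SimpleGraph V) (E : Finset (Sym2 V))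
    (hE : ∀ e ∈ E, e ∈ G.edgeSet) (a b : V) (hab : a ≠ b)
    (ha : degP E a = 1) (hb : degP E b = 1)
    (hother : ∀ v : V, v ≠ a → v ≠ b → degP E v = 0) :
    ∃ w : G.Walk a b, ∀ e ∈ w.edges, e ∈ E := by
  exact walk_of_odd_degrees G E.card E le_rfl hE a b hab
    (odd_card_of_degP_one ha) (odd_card_of_degP_one hb)
    (fun v hva hvb => even_card_of_degP_zero (hother v hva hvb))

end CHP

namespace CHP

open SimpleGraph FreeGroup Set
open scoped symmDiff

attribute [local instance] Classical.propDecidable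

variable {n : ℕ} {Rel : Set (FreeGroup (Fin n))}

/-! ### ndistSet lemmas -/

lemma ndistSet_le {V : Type*} {G : SimpleGraph V} {x a : V} {A : Set V} (ha : a ∈ A) :
    ndistSet G x A ≤ G.dist x a :=
  Nat.sInf_le ⟨a, ha, rfl⟩

lemma ndistSet_exists {V : Type*} {G : SimpleGraph V} {A : Set V} (hA : A.Nonempty) (x : V) :
    ∃ a ∈ A, G.dist x a = ndistSet G x A := by
  have h : {d : ℕ | ∃ a ∈ A, G.dist x a = d}.Nonempty :=
    ⟨G.dist x hA.some, hA.some, hA.some_mem, rfl⟩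
  exact Nat.sInf_mem h

lemma ndistSet_lipschitz {A : Set (presGroup n Rel)} (hA : A.Nonempty)
    (u v : presGroup n Rel) :
    ndistSet (presCayley n Rel) v A
      ≤ ndistSet (presCayley n Rel) u A + (presCayley n Rel).dist u v := by
  obtain ⟨a, haA, hd⟩ := ndistSet_exists (G := presCayley n Rel) hA u
  calc ndistSet (presCayley n Rel) v A ≤ (presCayley n Rel).dist v a := ndistSet_le haA
    _ ≤ (presCayley n Rel).dist v u + (presCayley n Rel).dist u a :=
        presCayley_connected.dist_triangle
    _ = ndistSet (presCayley n Rel) u A + (presCayley n Rel).dist u v := by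
        rw [hd, SimpleGraph.dist_comm]
        omega

/-! ### words from walks -/

lemma adj_step {x z : presGroup n Rel} (h : (presCayley n Rel).Adj x z) :
    ∃ t, x * lV Rel t = z := (presCayley_adj_iff.mp h).2

noncomputable def wordOfWalk :
    ∀ {x y : presGroup n Rel}, (presCayley n Rel).Walk x y → List (Fin n × Bool)
  | _, _, SimpleGraph.Walk.nil => []
  | _, _, SimpleGraph.Walk.cons h w => Classical.choose (adj_step h) :: wordOfWalk w

lemma visited_wordOfWalk {x y : presGroup n Rel} (w : (presCayley n Rel).Walk x y) :
    visited Rel x (wordOfWalk w) = w.support := by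
  induction w with
  | nil => simp [wordOfWalk, visited]
  | cons h w ih =>
      rename_i u v z
      show visited Rel u (Classical.choose (adj_step h) :: wordOfWalk w) = _
      rw [show visited Rel u (Classical.choose (adj_step h) :: wordOfWalk w)
          = u :: visited Rel (u * lV Rel (Classical.choose (adj_step h))) (wordOfWalk w)
          from rfl]
      rw [Classical.choose_spec (adj_step h), ih, SimpleGraph.Walk.support_cons]

lemma mul_prodV_wordOfWalk {x y : presGroup n Rel} (w : (presCayley n Rel).Walk x y) :
    x * prodV Rel (wordOfWalk w) = y := by
  induction w with
  | nil => simp [wordOfWalk, prodV_nil]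
  | cons h w ih =>
      rename_i u v z
      show u * prodV Rel (Classical.choose (adj_step h) :: wordOfWalk w) = z
      rw [prodV_cons, ← mul_assoc, Classical.choose_spec (adj_step h), ih]

/-! ### support of a walk vs edges -/

lemma walk_support_cases {V : Type*} {G : SimpleGraph V} {a b : V} (w : G.Walk a b) :
    ∀ v ∈ w.support, v = a ∨ ∃ e ∈ w.edges, v ∈ e := by
  induction w with
  | nil =>
      intro v hv
      simp [SimpleGraph.Walk.support_nil] at hv
      exact Or.inl hv
  | cons h w ih =>
      rename_i u c d
      intro v hv
      rw [SimpleGraph.Walk.support_cons, List.mem_cons] at hv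
      rcases hv with rfl | hv
      · exact Or.inl rfl
      · rcases ih v hv with rfl | ⟨e, he, hve⟩
        · exact Or.inr ⟨s(u, v), by simp [SimpleGraph.Walk.edges_cons], by simp⟩
        · exact Or.inr ⟨e, by simp [SimpleGraph.Walk.edges_cons, he], hve⟩

/-! ### splitting a chain sum into high and low parts -/

lemma split_cells (ε₀ r : ℕ) (h : presGroup n Rel → ℕ)
    (hLip : ∀ u v : presGroup n Rel, h v ≤ h u + (presCayley n Rel).dist u v)
    (hε : ∀ w ∈ Rel, (FreeGroup.toWord w).length ≤ ε₀) :
    ∀ L : List (presGroup n Rel × FreeGroup (Fin n)), (∀ c ∈ L, c.2 ∈ Rel) →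
    ∃ Hi Lo : Finset (Sym2 (presGroup n Rel)),
      foldChain Rel L = Hi ∆ Lo ∧
      (∀ v, degP Hi v = 0) ∧
      (∀ e ∈ Hi, e ∈ (presCayley n Rel).edgeSet) ∧
      (∀ e ∈ Lo, e ∈ (presCayley n Rel).edgeSet) ∧
      (∀ e ∈ Hi, ∀ v ∈ e, r ≤ h v) ∧
      (∀ e ∈ Lo, ∀ v ∈ e, h v ≤ r + ε₀) := by
  intro L
  induction L with
  | nil =>
      intro _
      refine ⟨∅, ∅, ?_, fun v => degP_empty v, by simp, by simp, by simp, by simp⟩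
      rw [foldChain_nil, symmDiff_self]
      rfl
  | cons c L ih =>
      intro hL
      obtain ⟨Hi, Lo, hfold, hdeg, hHiE, hLoE, hHiH, hLoH⟩ :=
        ih (fun c' hc' => hL c' (List.mem_cons_of_mem _ hc'))
      have hc2 : c.2 ∈ Rel := hL c List.mem_cons_self
      have hc1 : (QuotientGroup.mk c.2 : presGroup n Rel) = 1 := mk_eq_one_of_mem_rel hc2
      have hCeq : chainOf Rel c.1 c.2 = wordChain Rel c.1 c.2.toWord := rfl
      by_cases hhigh : ∀ v ∈ visited Rel c.1 c.2.toWord, r ≤ h v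
      · refine ⟨chainOf Rel c.1 c.2 ∆ Hi, Lo, ?_, ?_, ?_, hLoE, ?_, hLoH⟩
        · rw [foldChain_cons, hfold, symmDiff_assoc]
        · intro v
          rw [degP_symmDiff, hdeg, degP_chainOf_closed c.1 hc1, add_zero]
        · intro e he
          rcases Finset.mem_symmDiff.mp he with ⟨h1, -⟩ | ⟨h1, -⟩
          · exact mem_edgeSet_of_mem_wordChain (hCeq ▸ h1)
          · exact hHiE e h1
        · intro e he v hv
          rcases Finset.mem_symmDiff.mp he with ⟨h1, -⟩ | ⟨h1, -⟩
          · exact hhigh v (mem_visited_of_mem_wordChain (hCeq ▸ h1) v hv)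
          · exact hHiH e h1 v hv
      · refine ⟨Hi, chainOf Rel c.1 c.2 ∆ Lo, ?_, hdeg, hHiE, ?_, hHiH, ?_⟩
        · rw [foldChain_cons, hfold, symmDiff_left_comm]
        · intro e he
          rcases Finset.mem_symmDiff.mp he with ⟨h1, -⟩ | ⟨h1, -⟩
          · exact mem_edgeSet_of_mem_wordChain (hCeq ▸ h1)
          · exact hLoE e h1
        · intro e he v hv
          rcases Finset.mem_symmDiff.mp he with ⟨h1, -⟩ | ⟨h1, -⟩
          · push_neg at hhigh
            obtain ⟨u, hu_mem, hu⟩ := hhigh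
            have hvmem : v ∈ visited Rel c.1 c.2.toWord :=
              mem_visited_of_mem_wordChain (hCeq ▸ h1) v hv
            have hd : (presCayley n Rel).dist u v ≤ c.2.toWord.length :=
              dist_visited_pair hu_mem hvmem
            have hlen : c.2.toWord.length ≤ ε₀ := hε c.2 hc2
            have := hLip u v
            omega
          · exact hLoH e h1 v hv

end CHP

namespace CHP

open SimpleGraph FreeGroup Set
open scoped symmDiff

attribute [local instance] Classical.propDecidable

variable {n : ℕ} {Rel : Set (FreeGroup (Fin n))}

lemma adj_of_dist_one {u v : presGroup n Rel} (h : (presCayley n Rel).dist u v = 1) :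
    (presCayley n Rel).Adj u v := by
  obtain ⟨p, hp⟩ := presCayley_connected.exists_walk_length_eq_dist u v
  rw [h] at hp
  cases p with
  | nil => simp at hp
  | cons hadj q =>
      rw [SimpleGraph.Walk.length_cons] at hp
      have hq : q.length = 0 := by omega
      have := SimpleGraph.Walk.eq_of_length_eq_zero hq
      subst this
      exact hadj

lemma gamma_walk (γ : ℤ → presGroup n Rel)
    (hγ : ∀ m k : ℤ, (((presCayley n Rel).dist (γ m) (γ k) : ℤ)) = |m - k|) :
    ∀ (d : ℕ) (m : ℤ), ∃ w : (presCayley n Rel).Walk (γ m) (γ (m + d)),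
      ∀ v ∈ w.support, ∃ j, γ j = v := by
  intro d
  induction d with
  | zero =>
      intro m
      have he : γ m = γ (m + ((0 : ℕ) : ℤ)) := by norm_num
      refine ⟨(SimpleGraph.Walk.nil).copy rfl he, ?_⟩
      intro v hv
      rw [SimpleGraph.Walk.support_copy] at hv
      simp only [SimpleGraph.Walk.support_nil, List.mem_singleton] at hv
      exact ⟨m, hv.symm⟩
  | succ d ihd =>
      intro m
      have hd1 : (presCayley n Rel).dist (γ m) (γ (m + 1)) = 1 := by
        have := hγ m (m + 1)
        have h2 : |m - (m + 1)| = (1 : ℤ) := by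
          rw [show m - (m + 1) = (-1 : ℤ) by ring]
          norm_num
        rw [h2] at this
        omega
      have hadj := adj_of_dist_one hd1
      obtain ⟨w, hw⟩ := ihd (m + 1)
      have he : γ (m + 1 + (d : ℤ)) = γ (m + ((d : ℕ) + 1 : ℕ)) := by
        congr 1
        push_cast
        ring
      refine ⟨(SimpleGraph.Walk.cons hadj w).copy rfl he, ?_⟩
      intro v hv
      rw [SimpleGraph.Walk.support_copy, SimpleGraph.Walk.support_cons, List.mem_cons] at hv
      rcases hv with rfl | hv
      · exact ⟨m, rfl⟩
      · exact hw v hv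

lemma gamma_walk' (γ : ℤ → presGroup n Rel)
    (hγ : ∀ m k : ℤ, (((presCayley n Rel).dist (γ m) (γ k) : ℤ)) = |m - k|)
    (ka kb : ℤ) : ∃ w : (presCayley n Rel).Walk (γ ka) (γ kb),
      ∀ v ∈ w.support, ∃ j, γ j = v := by
  rcases le_total ka kb with hle | hle
  · obtain ⟨w, hw⟩ := gamma_walk γ hγ (kb - ka).toNat ka
    have he : γ (ka + ((kb - ka).toNat : ℤ)) = γ kb := by
      congr 1
      have := Int.toNat_of_nonneg (by omega : (0:ℤ) ≤ kb - ka)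
      omega
    refine ⟨w.copy rfl he, ?_⟩
    intro v hv
    rw [SimpleGraph.Walk.support_copy] at hv
    exact hw v hv
  · obtain ⟨w, hw⟩ := gamma_walk γ hγ (ka - kb).toNat kb
    have he : γ (kb + ((ka - kb).toNat : ℤ)) = γ ka := by
      congr 1
      have := Int.toNat_of_nonneg (by omega : (0:ℤ) ≤ ka - kb)
      omega
    refine ⟨(w.copy rfl he).reverse, ?_⟩
    intro v hv
    rw [SimpleGraph.Walk.support_reverse, List.mem_reverse, SimpleGraph.Walk.support_copy] at hv
    exact hw v hv

/-- a walk from a vertex at height `r` down to `γ` and along `γ`, staying at height `≤ r` -/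
lemma low_walk_to_gamma (γ : ℤ → presGroup n Rel) (r : ℕ) (x : presGroup n Rel)
    (hx : ndistSet (presCayley n Rel) x (Set.range γ) = r) :
    ∃ (k : ℤ) (w : (presCayley n Rel).Walk x (γ k)),
      ∀ v ∈ w.support, ndistSet (presCayley n Rel) v (Set.range γ) ≤ r := by
  have hne : (Set.range γ).Nonempty := ⟨γ 0, Set.mem_range_self 0⟩
  obtain ⟨pt, hpt_mem, hpt⟩ := ndistSet_exists (G := presCayley n Rel) hne x
  rw [hx] at hpt
  obtain ⟨k, rfl⟩ := hpt_mem
  obtain ⟨w, hw⟩ := presCayley_connected.exists_walk_length_eq_dist x (γ k)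
  refine ⟨k, w, ?_⟩
  intro v hv
  calc ndistSet (presCayley n Rel) v (Set.range γ)
      ≤ (presCayley n Rel).dist v (γ k) := ndistSet_le ⟨k, rfl⟩
    _ ≤ (w.dropUntil v hv).length := SimpleGraph.dist_le _
    _ ≤ w.length := SimpleGraph.Walk.length_dropUntil_le w hv
    _ = r := by rw [hw, hpt]

end CHP

open SimpleGraph FreeGroup Set CHP
open scoped symmDiff

attribute [local instance] Classical.propDecidable

/-- Constant-height paths: in the Cayley graph of a finite presentation with longest
relator of length `ε₀`, if `a, b` lie at distance `r` from a bi-infinite geodesic `γ`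
and are joined by a path disjoint from `N_{r-1}(γ)`, then they are joined by a path in
the annulus `A_{r ± ε₀}(γ)`. -/
theorem constant_height_paths (n : ℕ) (Rel : Set (FreeGroup (Fin n))) (hRel : Rel.Finite)
    (ε₀ : ℕ) (hε₀ : ∀ w ∈ Rel, (FreeGroup.toWord w).length ≤ ε₀)
    (γ : ℤ → presGroup n Rel)
    (hγ : ∀ m k : ℤ, ((presCayley n Rel).dist (γ m) (γ k) : ℤ) = |m - k|)
    (r : ℕ) (a b : presGroup n Rel)
    (ha : ndistSet (presCayley n Rel) a (Set.range γ) = r)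
    (hb : ndistSet (presCayley n Rel) b (Set.range γ) = r)
    (p : (presCayley n Rel).Walk a b)
    (hp : ∀ x ∈ p.support,
      (r : ℤ) - 1 < (ndistSet (presCayley n Rel) x (Set.range γ) : ℤ)) :
    ∃ q : (presCayley n Rel).Walk a b, ∀ x ∈ q.support,
      (r : ℤ) - ε₀ ≤ (ndistSet (presCayley n Rel) x (Set.range γ) : ℤ) ∧
      (ndistSet (presCayley n Rel) x (Set.range γ) : ℤ) ≤ (r : ℤ) + ε₀ := by

  by_cases hab : a = b
  · subst hab
    refine ⟨SimpleGraph.Walk.nil, ?_⟩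
    intro x hx
    simp only [SimpleGraph.Walk.support_nil, List.mem_singleton] at hx
    subst hx
    rw [ha]
    omega
  · -- heights on p are at least r
    have hpr : ∀ x ∈ p.support, r ≤ ndistSet (presCayley n Rel) x (Set.range γ) := by
      intro x hx
      have := hp x hx
      omega
    -- the low path p'
    obtain ⟨ka, wa, hwa⟩ := low_walk_to_gamma γ r a ha
    obtain ⟨kb, wb, hwb⟩ := low_walk_to_gamma γ r b hb
    obtain ⟨wγ, hwγ⟩ := gamma_walk' γ hγ ka kb
    set p' : (presCayley n Rel).Walk a b := wa.append (wγ.append wb.reverse) with hp'def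
    have hp'low : ∀ x ∈ p'.support, ndistSet (presCayley n Rel) x (Set.range γ) ≤ r := by
      intro x hx
      rw [hp'def, SimpleGraph.Walk.mem_support_append_iff] at hx
      rcases hx with hx | hx
      · exact hwa x hx
      · rw [SimpleGraph.Walk.mem_support_append_iff] at hx
        rcases hx with hx | hx
        · obtain ⟨j, rfl⟩ := hwγ x hx
          have h0 : ndistSet (presCayley n Rel) (γ j) (Set.range γ) = 0 := by
            have h1 : ndistSet (presCayley n Rel) (γ j) (Set.range γ)
                ≤ (presCayley n Rel).dist (γ j) (γ j) := ndistSet_le ⟨j, rfl⟩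
            rw [SimpleGraph.dist_self] at h1
            omega
          omega
        · rw [SimpleGraph.Walk.support_reverse, List.mem_reverse] at hx
          exact hwb x hx
    -- the two words
    set u : FreeGroup (Fin n) := FreeGroup.mk (wordOfWalk p) with hu
    set v : FreeGroup (Fin n) := FreeGroup.mk (wordOfWalk p') with hv
    have hπu : (QuotientGroup.mk u : presGroup n Rel) = a⁻¹ * b := by
      have h1 := mul_prodV_wordOfWalk p
      rw [prodV_eq_mk, ← hu] at h1
      rw [← h1]
      group
    have hπv : (QuotientGroup.mk v : presGroup n Rel) = a⁻¹ * b := by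
      have h1 := mul_prodV_wordOfWalk p'
      rw [prodV_eq_mk, ← hv] at h1
      rw [← h1]
      group
    have hmem : u * v⁻¹ ∈ Subgroup.normalClosure Rel := by
      rw [← QuotientGroup.eq_one_iff]
      rw [QuotientGroup.mk_mul, QuotientGroup.mk_inv, hπu, hπv]
      group
    obtain ⟨L, hLrel, hLeq⟩ := isChainSum_of_mem_normalClosure hmem a
    have hsplit0 : chainOf Rel a (u * v⁻¹)
        = wordChain Rel a (wordOfWalk p) ∆ wordChain Rel a (wordOfWalk p') := by
      rw [chainOf_mul, chainOf_inv, QuotientGroup.mk_inv, hπu, hπv]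
      rw [show a * (a⁻¹ * b) * (a⁻¹ * b)⁻¹ = a by group]
      rw [hu, hv, wordChain_eq_chainOf, wordChain_eq_chainOf]
    -- split the cells into high and low
    have hLip : ∀ x y : presGroup n Rel,
        ndistSet (presCayley n Rel) y (Set.range γ)
          ≤ ndistSet (presCayley n Rel) x (Set.range γ) + (presCayley n Rel).dist x y :=
      fun x y => ndistSet_lipschitz ⟨γ 0, Set.mem_range_self 0⟩ x y
    obtain ⟨Hi, Lo, hfold, hdegHi, hHiE, hLoE, hHiH, hLoH⟩ :=
      split_cells ε₀ r (fun x => ndistSet (presCayley n Rel) x (Set.range γ)) hLip hε₀ L hLrel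
    set P := wordChain Rel a (wordOfWalk p) with hP
    set P' := wordChain Rel a (wordOfWalk p') with hP'
    have hPP' : P ∆ P' = Hi ∆ Lo := by
      rw [← hsplit0, hLeq, hfold]
    set z := Hi ∆ P with hz
    have hz' : z = Lo ∆ P' := by
      calc Hi ∆ P = Hi ∆ ((P ∆ P') ∆ P') := by
            rw [symmDiff_assoc, symmDiff_self, symmDiff_bot]
        _ = Hi ∆ ((Hi ∆ Lo) ∆ P') := by rw [hPP']
        _ = Hi ∆ (Hi ∆ (Lo ∆ P')) := by rw [symmDiff_assoc]
        _ = Lo ∆ P' := by rw [← symmDiff_assoc, symmDiff_self, bot_symmDiff]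
    have hdegz : ∀ x : presGroup n Rel,
        degP z x = (if x = a then 1 else 0) + (if x = b then 1 else 0) := by
      intro x
      rw [hz, degP_symmDiff, hdegHi, zero_add, hP, degP_wordChain]
      rw [show a * prodV Rel (wordOfWalk p) = b from mul_prodV_wordOfWalk p]
    have hzE : ∀ e ∈ z, e ∈ (presCayley n Rel).edgeSet := by
      intro e he
      rcases Finset.mem_symmDiff.mp (hz ▸ he) with ⟨h1, -⟩ | ⟨h1, -⟩
      · exact hHiE e h1
      · exact mem_edgeSet_of_mem_wordChain h1
    have hlow : ∀ e ∈ z, ∀ x ∈ e, r ≤ ndistSet (presCayley n Rel) x (Set.range γ) := by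
      intro e he x hx
      rcases Finset.mem_symmDiff.mp (hz ▸ he) with ⟨h1, -⟩ | ⟨h1, -⟩
      · exact hHiH e h1 x hx
      · have h2 := mem_visited_of_mem_wordChain h1 x hx
        rw [visited_wordOfWalk] at h2
        exact hpr x h2
    have hhigh : ∀ e ∈ z, ∀ x ∈ e,
        ndistSet (presCayley n Rel) x (Set.range γ) ≤ r + ε₀ := by
      intro e he x hx
      rcases Finset.mem_symmDiff.mp (hz' ▸ he) with ⟨h1, -⟩ | ⟨h1, -⟩
      · exact hLoH e h1 x hx
      · have h2 := mem_visited_of_mem_wordChain h1 x hx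
        rw [visited_wordOfWalk] at h2
        have := hp'low x h2
        omega
    have hodda : degP z a = 1 := by
      rw [hdegz a, if_pos rfl, if_neg hab, add_zero]
    have hoddb : degP z b = 1 := by
      rw [hdegz b, if_pos rfl, if_neg (fun h => hab h.symm), zero_add]
    have hothers : ∀ x : presGroup n Rel, x ≠ a → x ≠ b → degP z x = 0 := by
      intro x hxa hxb
      rw [hdegz x, if_neg hxa, if_neg hxb, add_zero]
    obtain ⟨q, hq⟩ := walk_of_degP (presCayley n Rel) z hzE a b hab hodda hoddb hothers
    refine ⟨q, ?_⟩
    intro x hx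
    rcases walk_support_cases q x hx with rfl | ⟨e, he, hxe⟩
    · rw [ha]
      omega
    · have h1 := hlow e (hq e he) x hxe
      have h2 := hhigh e (hq e he) x hxe
      omega
end
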